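/- arXiv:1805.07811 — 11 statements merged into one kernel-verified Lean document; each statement's English description precedes it below -/
import Mathlib

section
/- There exists a nonnegative integer n₀ such that the sequence (T_n)_{n ≥ n₀} is the sequence of best approximations of the vector (1/β, 1/β²) for the Rauzy norm 𝒩; that is, there exists n₀ such that for every n ≥ n₀ and every integer q with 0 < q < T_n one has 𝒩₀(T_n·(1/β, 1/β²)) < 𝒩₀(q·(1/β, 1/β²)). -/
open scoped BigOperators

/-- The recurrent integer sequence `T` with `T 0 = 1`, `T 1 = a`, `T 2 = a² + b`,
`T (n+3) = a T(n+2) + b T(n+1) + T n`. -/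
def Tseq (a b : ℤ) : ℕ → ℤ
  | 0 => 1
  | 1 => a
  | 2 => a ^ 2 + b
  | n + 3 => a * Tseq a b (n + 2) + b * Tseq a b (n + 1) + Tseq a b n

/-- The comparison word `(a-1)(a+b-1)(a+b)(a+b)⋯`. -/
def ruleWord (a b : ℤ) : ℕ → ℤ
  | 0 => a - 1
  | 1 => a + b - 1
  | _ + 2 => a + b

/-- The word `d j, d (j-1), …, d (j-k)` is lexicographically ≤ the word
`ruleWord 0, …, ruleWord k`. -/
def WordLe (a b : ℤ) (d : ℕ → ℕ) (j k : ℕ) : Prop :=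
  (∀ i ≤ k, (d (j - i) : ℤ) = ruleWord a b i) ∨
    ∃ m ≤ k, (∀ i < m, (d (j - i) : ℤ) = ruleWord a b i) ∧ (d (j - m) : ℤ) < ruleWord a b m

/-- Every finite factor `d j ⋯ d (j-k)` is lexicographically ≤ `(a-1)(a+b-1)(a+b)⋯(a+b)`. -/
def AdmissibleWord (a b : ℤ) (d : ℕ → ℕ) : Prop :=
  ∀ j k : ℕ, k ≤ j → WordLe a b d j k

/-- An admissible finitely supported digit sequence. -/
def IsAdmissible (a b : ℤ) (d : ℕ → ℕ) : Prop :=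
  (Function.support d).Finite ∧ AdmissibleWord a b d

/-- The Rauzy norm `𝒩(x₁,x₂) = |(α + b/β)x₁ + x₂/β|`. -/
noncomputable def rnorm (b : ℤ) (β : ℝ) (α : ℂ) (x : Fin 2 → ℝ) : ℝ :=
  ‖(α + (b : ℂ) / (β : ℂ)) * (x 0 : ℂ) + (x 1 : ℂ) / (β : ℂ)‖

/-- `𝒩₀(w) = inf {𝒩(w - p) : p ∈ ℤ²}`. -/
noncomputable def rnorm0 (b : ℤ) (β : ℝ) (α : ℂ) (w : Fin 2 → ℝ) : ℝ :=
  sInf {r | ∃ g : Fin 2 → ℤ, r = rnorm b β α (w - fun i => (g i : ℝ))}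

/-- `δ(N) = N(1/β, 1/β²) − (Σ_{j≥1} d_j T_{j-1}, Σ_{j≥2} d_j T_{j-2})`. -/
noncomputable def deltaVec (a b : ℤ) (β : ℝ) (N : ℕ) (d : ℕ → ℕ) : Fin 2 → ℝ :=
  ![(N : ℝ) / β - ∑ᶠ j : ℕ, (d (j + 1) : ℝ) * (Tseq a b j : ℝ),
    (N : ℝ) / β ^ 2 - ∑ᶠ j : ℕ, (d (j + 2) : ℝ) * (Tseq a b j : ℝ)]

/-- The matrix `B`. -/
noncomputable def Bmat (b : ℤ) (β : ℝ) : Matrix (Fin 2) (Fin 2) ℝ :=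
  !![-b / β, -1 / β; 1 - b / β ^ 2, -1 / β ^ 2]

/-- The Rauzy fractal `𝓡 = {Σ_{i≥2} d_i α^i}` over admissible digit sequences,
where the digit sequence `(d_i)_{i≥2}` is encoded as `i ↦ d (i+2)`. -/
def RauzyFractal (a b : ℤ) (α : ℂ) : Set ℂ :=
  {z | ∃ d : ℕ → ℕ, AdmissibleWord a b d ∧ z = ∑' i : ℕ, (d i : ℂ) * α ^ (i + 2)}

def Xseq (a b : ℤ) : ℕ → ℤ
  | 0 => 0
  | 1 => b
  | 2 => a * b + 1
  | n + 3 => a * Xseq a b (n + 2) + b * Xseq a b (n + 1) + Xseq a b n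

def Yseq (a b : ℤ) : ℕ → ℤ
  | 0 => 0
  | 1 => 1
  | 2 => a
  | n + 3 => a * Yseq a b (n + 2) + b * Yseq a b (n + 1) + Yseq a b n

lemma pow_eq_TXY (a b : ℤ) {R : Type*} [CommRing R] (x : R)
    (hx : x ^ 3 = (a : R) * x ^ 2 + (b : R) * x + 1) :
    ∀ n : ℕ, x ^ (n + 2) =
      (Tseq a b n : R) * x ^ 2 + (Xseq a b n : R) * x + (Yseq a b n : R) := by
  intro n
  induction n using Nat.strong_induction_on with
  | _ n ih =>
    match n with
    | 0 => simp [Tseq, Xseq, Yseq]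
    | 1 => simpa [Tseq, Xseq, Yseq] using hx
    | 2 =>
      have h3 : x ^ 4 = (a:R) * x ^ 3 + (b:R) * x ^ 2 + x := by
        calc x ^ 4 = x ^ 3 * x := by ring
        _ = ((a : R) * x ^ 2 + (b : R) * x + 1) * x := by rw [hx]
        _ = (a:R) * x ^ 3 + (b:R) * x ^ 2 + x := by ring
      rw [show (2:ℕ)+2 = 4 from rfl, h3, hx]
      simp only [Tseq, Xseq, Yseq]
      push_cast
      ring
    | (n + 3) =>
      have h0 := ih n (by omega)
      have h1 := ih (n+1) (by omega)
      have h2 := ih (n+2) (by omega)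
      have hstep : x ^ (n + 5) = (a:R) * x ^ (n + 4) + (b:R) * x ^ (n+3) + x ^ (n+2) := by
        have hh : x ^ (n+5) = x ^ (n+2) * x ^ 3 := by ring
        rw [hh, hx]; ring
      have hn5 : (n + 3) + 2 = n + 5 := by omega
      rw [hn5, hstep]
      rw [show n + 4 = (n+2) + 2 from rfl] at *
      rw [show n + 3 = (n+1) + 2 from rfl] at *
      rw [h2, h1, h0]
      simp only [Tseq, Xseq, Yseq]
      push_cast
      ring

lemma prod_eta (x y z Q K M : ℂ) :
    (Q * x ^ 2 + K * x + M) * (Q * y ^ 2 + K * y + M) * (Q * z ^ 2 + K * z + M) =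
      M ^ 3 + (x + y + z) * K * M ^ 2 + (x * y + x * z + y * z) * K ^ 2 * M
        + (x * y * z) * K ^ 3 + (x + y + z) ^ 2 * Q * M ^ 2
        - 2 * (x * y + x * z + y * z) * Q * M ^ 2
        + (x + y + z) * (x * y + x * z + y * z) * Q * K * M
        - 3 * (x * y * z) * Q * K * M
        + (x + y + z) * (x * y * z) * Q * K ^ 2
        + (x * y + x * z + y * z) ^ 2 * Q ^ 2 * M
        - 2 * (x + y + z) * (x * y * z) * Q ^ 2 * M
        + (x * y + x * z + y * z) * (x * y * z) * Q ^ 2 * K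
        + (x * y * z) ^ 2 * Q ^ 3 := by ring

section RatRootSec
open Polynomial

lemma no_rat_root (a b : ℤ) (hab : -a + 1 ≤ b) (hb : b ≤ -2) (x : ℚ)
    (hx : x ^ 3 = (a : ℚ) * x ^ 2 + (b : ℚ) * x + 1) : False := by
  have ha3 : 3 ≤ a := by omega
  set p : ℤ[X] := X ^ 3 - C a * X ^ 2 - C b * X - C 1 with hp
  have hdeg : p.natDegree = 3 := by rw [hp]; compute_degree!
  have hmonic : p.Monic := by
    apply Polynomial.monic_of_natDegree_le_of_coeff_eq_one 3
    · rw [hdeg]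
    · rw [hp]; simp only [coeff_sub, coeff_X_pow, coeff_C_mul, coeff_X, coeff_C]; norm_num
  have haev : aeval x p = 0 := by
    rw [hp]
    simp only [map_sub, map_mul, map_pow, aeval_X, aeval_C, map_one]
    have h1 : ((algebraMap ℤ ℚ) a : ℚ) = (a : ℚ) := by simp
    have h2 : ((algebraMap ℤ ℚ) b : ℚ) = (b : ℚ) := by simp
    rw [h1, h2, hx]; ring
  obtain ⟨t, hxt, hdvd⟩ := exists_integer_of_is_root_of_monic hmonic haev
  have hc0 : p.coeff 0 = -1 := by
    rw [hp]; simp only [coeff_sub, coeff_X_pow, coeff_C_mul, coeff_X, coeff_C]; norm_num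
  rw [hc0] at hdvd
  have hdvd1 : t ∣ 1 := (dvd_neg).mp hdvd
  have ht : t = 1 ∨ t = -1 := Int.isUnit_iff.mp (isUnit_of_dvd_one hdvd1)
  have hxe : x = (t : ℚ) := by rw [hxt]; simp
  rcases ht with rfl | rfl
  · rw [hxe] at hx; push_cast at hx
    have : (a : ℚ) + b = 0 := by linarith
    have : a + b = 0 := by exact_mod_cast this
    omega
  · rw [hxe] at hx; push_cast at hx
    have : (b : ℚ) = a + 2 := by linarith
    have : b = a + 2 := by exact_mod_cast this
    omega

lemma eta_ne_zero (a b : ℤ) (hab : -a + 1 ≤ b) (hb : b ≤ -2) (r : ℂ)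
    (hroot : r ^ 3 = (a : ℂ) * r ^ 2 + (b : ℂ) * r + 1) (q k m : ℤ) (hq : q ≠ 0) :
    (q : ℂ) * r ^ 2 + (k : ℂ) * r + (m : ℂ) ≠ 0 := by
  set p : ℚ[X] := X ^ 3 - C (a:ℚ) * X ^ 2 - C (b:ℚ) * X - C 1 with hp
  have hdeg : p.natDegree = 3 := by rw [hp]; compute_degree!
  have hdeg' : p.degree = 3 := by
    rw [Polynomial.degree_eq_natDegree (p := p), hdeg]
    · rfl
    · intro h; rw [h] at hdeg; simp at hdeg
  have hmonic : p.Monic := by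
    apply Polynomial.monic_of_natDegree_le_of_coeff_eq_one 3
    · rw [hdeg]
    · rw [hp]; simp only [coeff_sub, coeff_X_pow, coeff_C_mul, coeff_X, coeff_C]; norm_num
  have hirr : Irreducible p := by
    rw [Polynomial.irreducible_iff_roots_eq_zero_of_degree_le_three (by omega) (by omega)]
    rw [Multiset.eq_zero_iff_forall_notMem]
    intro x hx
    rw [Polynomial.mem_roots] at hx
    · have hev : p.eval x = 0 := hx
      rw [hp] at hev
      simp only [eval_sub, eval_mul, eval_pow, eval_X, eval_C] at hev
      exact no_rat_root a b hab hb x (by linarith [hev])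
    · intro h; rw [h] at hdeg; simp at hdeg
  have haev : (Polynomial.aeval r) p = 0 := by
    rw [hp]
    simp only [map_sub, map_mul, map_pow, aeval_X, aeval_C, map_one, eq_ratCast]
    push_cast
    rw [hroot]; ring
  have hmin : p = minpoly ℚ r := minpoly.eq_of_irreducible_of_monic hirr haev hmonic
  intro hzero
  set g : ℚ[X] := C (q:ℚ) * X ^ 2 + C (k:ℚ) * X + C (m:ℚ) with hg
  have hgne : g ≠ 0 := by
    intro h
    have : g.coeff 2 = 0 := by rw [h]; simp
    rw [hg] at this
    simp only [coeff_add, coeff_C_mul, coeff_X_pow, coeff_X, coeff_C] at this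
    norm_num at this
    exact hq (by exact_mod_cast this)
  have hgaev : (Polynomial.aeval r) g = 0 := by
    rw [hg]
    simp only [map_add, map_mul, map_pow, aeval_X, aeval_C, eq_ratCast]
    push_cast
    linear_combination hzero
  have hle := minpoly.degree_le_of_ne_zero ℚ r hgne hgaev
  rw [← hmin, hdeg'] at hle
  have hgd : g.degree ≤ 2 := by rw [hg]; exact Polynomial.degree_quadratic_le
  have : (3 : WithBot ℕ) ≤ 2 := le_trans hle hgd
  norm_num at this

end RatRootSec

lemma core_aux (S c₂ E u qS B : ℝ) (hS : 0 < S) (hc₂ : 0 ≤ c₂) (hE : 0 ≤ E)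
    (hu : 0 < u) (hu1 : u ≤ 1) (hB : u ^ 2 * B = 1)
    (h2 : 16 * E * u ≤ 1) (h3 : 8 * c₂ * u ≤ S) (h1 : S * u ^ 2 ≤ 1)
    (hq : qS ≤ B - S + 2 * S * E * u) (hqpos : 0 < qS) :
    ((1 + S * u ^ 2 / 8) * u) ^ 2 * (qS + c₂ * ((1 + S * u ^ 2 / 8) * u)) < 1 := by
  have hu2 : 0 < u ^ 2 := by positivity
  have hqu : qS * u ^ 2 ≤ 1 - S * u ^ 2 + 2 * S * E * u ^ 3 := by nlinarith
  set s := S * u ^ 2 with hs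
  have hs0 : 0 < s := by positivity
  have hs1 : s ≤ 1 := h1
  have hEu : 2 * S * E * u ^ 3 ≤ s / 8 := by
    have : 2 * E * u ≤ 1 / 8 := by linarith
    calc 2 * S * E * u ^ 3 = (2 * E * u) * (S * u ^ 2) := by ring
    _ ≤ (1/8) * s := by
        apply mul_le_mul this (le_refl s) (le_of_lt hs0) (by norm_num)
    _ = s / 8 := by ring
  have hc3 : c₂ * ((1 + s / 8) * u) ^ 3 ≤ (3 / 16) * s := by
    have h18 : (1 + s / 8) ^ 3 ≤ 3 / 2 := by
      have h9 : 1 + s / 8 ≤ 9 / 8 := by linarith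
      have h0 : (0:ℝ) ≤ 1 + s / 8 := by linarith
      calc (1 + s / 8) ^ 3 ≤ (9/8) ^ 3 := pow_le_pow_left₀ h0 h9 3
      _ ≤ 3 / 2 := by norm_num
    have hcu : c₂ * u ≤ S / 8 := by linarith
    calc c₂ * ((1 + s / 8) * u) ^ 3 = (c₂ * u) * ((1 + s/8) ^ 3 * u ^ 2) := by ring
    _ ≤ (S / 8) * ((3 / 2) * u ^ 2) := by
        apply mul_le_mul hcu _ (by positivity) (by positivity)
        apply mul_le_mul_of_nonneg_right h18 (le_of_lt hu2)
    _ = (3 / 16) * s := by rw [hs]; ring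
  -- main estimate
  have key : ((1 + s / 8) * u) ^ 2 * qS ≤ (1 + s / 8) ^ 2 * (1 - (7/8) * s) := by
    have h7 : qS * u ^ 2 ≤ 1 - (7/8) * s := by
      calc qS * u ^ 2 ≤ 1 - s + 2 * S * E * u ^ 3 := by rw [hs]; exact hqu
      _ ≤ 1 - s + s / 8 := by linarith
      _ = 1 - (7/8) * s := by ring
    calc ((1 + s / 8) * u) ^ 2 * qS = (1 + s / 8) ^ 2 * (qS * u ^ 2) := by ring
    _ ≤ (1 + s / 8) ^ 2 * (1 - (7/8) * s) := by
        apply mul_le_mul_of_nonneg_left h7 (by positivity)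
  have expand : (1 + s / 8) ^ 2 * (1 - (7/8) * s) + (3/16) * s ≤ 1 - (7/16) * s := by
    nlinarith [hs0, mul_pos hs0 hs0, mul_pos (mul_pos hs0 hs0) hs0]
  calc ((1 + s / 8) * u) ^ 2 * (qS + c₂ * ((1 + s / 8) * u))
      = ((1 + s / 8) * u) ^ 2 * qS + c₂ * ((1 + s/8) * u) ^ 3 := by ring
  _ ≤ (1 + s / 8) ^ 2 * (1 - (7/8) * s) + (3/16) * s := by linarith
  _ ≤ 1 - (7/16) * s := by linarith
  _ < 1 := by linarith

lemma v_gt_t (S c₂ E u qS B v w : ℝ) (hS : 0 < S) (hc₂ : 0 ≤ c₂) (hE : 0 ≤ E)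
    (hu : 0 < u) (hu1 : u ≤ 1) (hB : u ^ 2 * B = 1)
    (h2 : 16 * E * u ≤ 1) (h3 : 8 * c₂ * u ≤ S) (h1 : S * u ^ 2 ≤ 1)
    (hq : qS ≤ B - S + 2 * S * E * u) (hqpos : 0 < qS)
    (hv : 0 ≤ v) (hw : 0 ≤ w) (hvw : 1 ≤ w * (v * v)) (hwb : w ≤ qS + c₂ * v) :
    (1 + S * u ^ 2 / 8) * u < v := by
  by_contra hcon
  push_neg at hcon
  have hcore := core_aux S c₂ E u qS B hS hc₂ hE hu hu1 hB h2 h3 h1 hq hqpos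
  set t := (1 + S * u ^ 2 / 8) * u with ht
  have ht0 : 0 ≤ t := by positivity
  have hchain : (1:ℝ) ≤ t ^ 2 * (qS + c₂ * t) := by
    calc (1:ℝ) ≤ w * (v * v) := hvw
    _ ≤ (qS + c₂ * v) * (v * v) := by nlinarith
    _ ≤ (qS + c₂ * t) * (t * t) := by
        have h4 : v * v ≤ t * t := mul_le_mul hcon hcon hv ht0
        have h5 : qS + c₂ * v ≤ qS + c₂ * t := by nlinarith
        apply mul_le_mul h5 h4 (by positivity) (by positivity)
    _ = t ^ 2 * (qS + c₂ * t) := by ring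
  linarith

set_option maxHeartbeats 2000000

/-- There exists `n₀` such that `(T n)_{n ≥ n₀}` is the sequence of best approximations
of `(1/β, 1/β²)` for the Rauzy norm. -/
theorem best_approximations
    (a b : ℤ) (hab : -a + 1 ≤ b) (hb : b ≤ -2)
    (β : ℝ) (hβ : 1 < β) (hβroot : β ^ 3 = a * β ^ 2 + b * β + 1)
    (α : ℂ) (hαim : α.im ≠ 0) (hαroot : α ^ 3 = a * α ^ 2 + b * α + 1)
    (hαabs : ‖α‖ < 1) :
    ∃ n₀ : ℕ, ∀ n : ℕ, n₀ ≤ n → ∀ q : ℤ, 0 < q → q < Tseq a b n →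
      rnorm0 b β α ![(Tseq a b n : ℝ) / β, (Tseq a b n : ℝ) / β ^ 2] <
        rnorm0 b β α ![(q : ℝ) / β, (q : ℝ) / β ^ 2] := by
  have hβpos : (0:ℝ) < β := lt_trans one_pos hβ
  have hβ'ne : (β:ℂ) ≠ 0 := Complex.ofReal_ne_zero.mpr (ne_of_gt hβpos)
  have hαne : α ≠ 0 := fun h => hαim (by rw [h]; rfl)
  have hᾱim : ((starRingEnd ℂ) α).im = -α.im := Complex.conj_im α
  have hαᾱ : α ≠ (starRingEnd ℂ) α := by
    intro h
    apply hαim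
    have := congrArg Complex.im h
    rw [hᾱim] at this; linarith
  have hβα : (β:ℂ) ≠ α := by
    intro h
    apply hαim
    rw [← h]
    exact Complex.ofReal_im β
  have hβᾱ : (β:ℂ) ≠ (starRingEnd ℂ) α := by
    intro h
    apply hαim
    have := congrArg Complex.im h
    rw [hᾱim, Complex.ofReal_im] at this
    linarith
  have hβc : (β:ℂ) ^ 3 = (a:ℂ) * (β:ℂ) ^ 2 + (b:ℂ) * (β:ℂ) + 1 := by exact_mod_cast hβroot
  have hᾱroot : ((starRingEnd ℂ) α) ^ 3
      = (a:ℂ) * ((starRingEnd ℂ) α) ^ 2 + (b:ℂ) * ((starRingEnd ℂ) α) + 1 := by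
    have := congrArg (starRingEnd ℂ) hαroot
    simpa [map_add, map_mul, map_pow, map_one, map_intCast] using this
  -- Vieta
  have pair : ∀ x y : ℂ, x ≠ y → x ^ 3 = (a:ℂ)*x^2+(b:ℂ)*x+1 → y ^ 3 = (a:ℂ)*y^2+(b:ℂ)*y+1 →
      x^2 + x*y + y^2 = (a:ℂ)*(x+y) + (b:ℂ) := by
    intro x y hxy hx hy
    have h0 : (x - y) * (x^2 + x*y + y^2 - (a:ℂ)*(x+y) - (b:ℂ)) = 0 := by
      linear_combination hx - hy
    rcases mul_eq_zero.mp h0 with h | h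
    · exact absurd (sub_eq_zero.mp h) hxy
    · linear_combination h
  have h1 := pair (β:ℂ) α hβα hβc hαroot
  have h2 := pair α ((starRingEnd ℂ) α) hαᾱ hαroot hᾱroot
  have e1 : (β:ℂ) + α + (starRingEnd ℂ) α = (a:ℂ) := by
    have h0 : ((β:ℂ) - (starRingEnd ℂ) α) * ((β:ℂ) + α + (starRingEnd ℂ) α - (a:ℂ)) = 0 := by
      linear_combination h1 - h2
    rcases mul_eq_zero.mp h0 with h | h
    · exact absurd (sub_eq_zero.mp h) hβᾱ
    · linear_combination h
  have e2 : (β:ℂ)*α + (β:ℂ)*((starRingEnd ℂ) α) + α*((starRingEnd ℂ) α) = -(b:ℂ) := by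
    linear_combination ((β:ℂ) + α) * e1 - h1
  have e3 : (β:ℂ) * α * ((starRingEnd ℂ) α) = 1 := by
    linear_combination hβc - (β:ℂ)^2 * e1 + (β:ℂ) * e2
  -- constants
  set A := ‖α‖ with hA
  have hA0 : 0 < A := norm_pos_iff.mpr hαne
  have hA2β : A ^ 2 * β = 1 := by
    have h := e3
    rw [mul_assoc, Complex.mul_conj] at h
    have h' : ((β * Complex.normSq α : ℝ) : ℂ) = ((1:ℝ):ℂ) := by push_cast; linear_combination h
    have hr : β * Complex.normSq α = 1 := by exact_mod_cast h'
    rw [hA, Complex.sq_norm]; linarith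
  set r0 := ‖(β:ℂ) - α‖ with hr0
  have hr0pos : 0 < r0 := norm_pos_iff.mpr (sub_ne_zero.mpr hβα)
  set S := r0 ^ 2 with hS
  have hSpos : 0 < S := by positivity
  set dd := ‖α - (starRingEnd ℂ) α‖ with hdd
  have hddpos : 0 < dd := norm_pos_iff.mpr (sub_ne_zero.mpr hαᾱ)
  set c₂ := 2 * r0 / dd with hc₂
  have hc₂pos : 0 < c₂ := by positivity
  set E := r0 / (S * dd) with hE
  have hEpos : 0 < E := by positivity
  have hβᾱconj : (β:ℂ) - (starRingEnd ℂ) α = (starRingEnd ℂ) ((β:ℂ) - α) := by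
    rw [map_sub, Complex.conj_ofReal]
  have habsβᾱ : ‖(β:ℂ) - (starRingEnd ℂ) α‖ = r0 := by
    rw [hβᾱconj, Complex.norm_conj]
  have hSc : ((β:ℂ) - α) * ((β:ℂ) - (starRingEnd ℂ) α) = ((S:ℝ):ℂ) := by
    rw [hβᾱconj, Complex.mul_conj, hS, hr0, Complex.sq_norm]
  -- inverse relation and R identity
  have hinv : ((β:ℂ))⁻¹ = α * ((starRingEnd ℂ) α) := by
    apply inv_eq_of_mul_eq_one_right
    linear_combination e3
  have hR : α + (starRingEnd ℂ) α + (b:ℂ)*(α*((starRingEnd ℂ) α)) + (α*((starRingEnd ℂ) α))^2 = 0 := by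
    rw [← hinv]
    have hsum : α + (starRingEnd ℂ) α = (a:ℂ) - (β:ℂ) := by linear_combination e1
    rw [hsum]
    have hβinv : (β:ℂ) * (β:ℂ)⁻¹ = 1 := mul_inv_cancel₀ hβ'ne
    linear_combination (-((β:ℂ)⁻¹)^2) * hβc
      + ((β:ℂ) * ((β:ℂ) * (β:ℂ)⁻¹ + 1) - (a:ℂ) * ((β:ℂ) * (β:ℂ)⁻¹ + 1) - (b:ℂ) * (β:ℂ)⁻¹) * hβinv
  have hinv2 : (((β:ℂ))^2)⁻¹ = (α * ((starRingEnd ℂ) α))^2 := by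
    rw [← inv_pow, hinv]
  have hval : ∀ (N : ℤ) (g : Fin 2 → ℤ),
      rnorm b β α (![(N:ℝ)/β, (N:ℝ)/β^2] - fun i => (g i : ℝ)) =
      A * ‖(N:ℂ) * ((starRingEnd ℂ) α)^2
        + ((b*(g 0)+(g 1) : ℤ):ℂ) * ((starRingEnd ℂ) α) + ((g 0 : ℤ):ℂ)‖ := by
    intro N g
    unfold rnorm
    have h00 : ((![(N:ℝ)/β, (N:ℝ)/β^2] - fun i => (g i : ℝ)) 0) = (N:ℝ)/β - (g 0 : ℝ) := by
      simp [Pi.sub_apply]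
    have h01 : ((![(N:ℝ)/β, (N:ℝ)/β^2] - fun i => (g i : ℝ)) 1) = (N:ℝ)/β^2 - (g 1 : ℝ) := by
      simp [Pi.sub_apply]
    rw [h00, h01]
    have key : (α + (b:ℂ)/(β:ℂ)) * ((((N:ℝ)/β - (g 0 : ℝ)) : ℝ) : ℂ)
        + ((((N:ℝ)/β^2 - (g 1 : ℝ)) : ℝ):ℂ)/(β:ℂ)
        = (-α) * ((N:ℂ) * ((starRingEnd ℂ) α)^2
          + ((b*(g 0)+(g 1) : ℤ):ℂ) * ((starRingEnd ℂ) α) + ((g 0 : ℤ):ℂ)) := by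
      push_cast
      simp only [div_eq_mul_inv, hinv, hinv2]
      linear_combination ((N:ℂ) * (α * ((starRingEnd ℂ) α))) * hR
    rw [key, norm_mul, norm_neg, ← hA]
  have tri : ∀ x y z : ℂ, ‖x - y + z‖ ≤ ‖x‖ + ‖y‖ + ‖z‖ := by
    intro x y z
    calc ‖x - y + z‖ ≤ ‖x - y‖ + ‖z‖ := norm_add_le _ _
    _ ≤ (‖x‖ + ‖y‖) + ‖z‖ := by
        have h := norm_add_le x (-y)
        rw [norm_neg] at h
        rw [sub_eq_add_neg]
        exact add_le_add_left h _
  have habsβp : ∀ p : ℕ, ‖((β:ℂ))^p‖ = β^p := by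
    intro p; rw [norm_pow, Complex.norm_real, Real.norm_of_nonneg hβpos.le]
  have habsᾱp : ∀ p : ℕ, ‖((starRingEnd ℂ) α)^p‖ = A^p := by
    intro p; rw [norm_pow, Complex.norm_conj, ← hA]
  have hTle : ∀ n : ℕ, (Tseq a b n : ℝ) ≤ β^(n+2)/S + 2*E*A^(n+2) := by
    intro n
    have hTβc := pow_eq_TXY a b ((β:ℂ)) hβc n
    have hTα := pow_eq_TXY a b α hαroot n
    have hTᾱ := pow_eq_TXY a b ((starRingEnd ℂ) α) hᾱroot n
    have hLag : (Tseq a b n : ℂ) * (((β:ℂ) - α) * ((β:ℂ) - (starRingEnd ℂ) α) * (α - (starRingEnd ℂ) α))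
        = ((β:ℂ))^(n+2) * (α - (starRingEnd ℂ) α) - α^(n+2) * ((β:ℂ) - (starRingEnd ℂ) α)
          + ((starRingEnd ℂ) α)^(n+2) * ((β:ℂ) - α) := by
      linear_combination (-(α - (starRingEnd ℂ) α)) * hTβc + ((β:ℂ) - (starRingEnd ℂ) α) * hTα
        + (-((β:ℂ) - α)) * hTᾱ
    have habsΔ : ‖((β:ℂ) - α) * ((β:ℂ) - (starRingEnd ℂ) α) * (α - (starRingEnd ℂ) α)‖ = S * dd := by
      rw [norm_mul, norm_mul, habsβᾱ, ← hr0, ← hdd, hS]; ring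
    have hub : ‖((Tseq a b n : ℤ):ℂ)‖ * (S * dd)
        ≤ β^(n+2) * dd + (A^(n+2) * r0 + A^(n+2) * r0) := by
      rw [← habsΔ, ← norm_mul, hLag]
      refine le_trans (tri _ _ _) ?_
      rw [norm_mul, norm_mul, norm_mul, habsβp, habsᾱp, norm_pow, ← hA, ← hdd, habsβᾱ, ← hr0]
      linarith
    have hTabs : (Tseq a b n : ℝ) ≤ ‖((Tseq a b n : ℤ):ℂ)‖ := by
      rw [Complex.norm_intCast]
      exact le_abs_self _
    have hSd : 0 < S * dd := by positivity
    have hmul : (Tseq a b n : ℝ) * (S * dd) ≤ (β^(n+2)/S + 2*E*A^(n+2)) * (S * dd) := by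
      have hfinal : (β^(n+2)/S + 2*E*A^(n+2)) * (S*dd)
          = β^(n+2)*dd + (A^(n+2)*r0 + A^(n+2)*r0) := by
        rw [hE]; field_simp; ring
      rw [hfinal]
      calc (Tseq a b n : ℝ) * (S * dd) ≤ ‖((Tseq a b n : ℤ):ℂ)‖ * (S * dd) :=
        mul_le_mul_of_nonneg_right hTabs (le_of_lt hSd)
      _ ≤ _ := hub
    exact le_of_mul_le_mul_right hmul hSd
  -- per-value norm lower bound
  have hlow : ∀ (qz k m : ℤ), 0 < qz →
      (1:ℝ) ≤ ‖(qz:ℂ)*((β:ℂ))^2 + (k:ℂ)*(β:ℂ) + (m:ℂ)‖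
            * (‖(qz:ℂ)*((starRingEnd ℂ) α)^2 + (k:ℂ)*((starRingEnd ℂ) α) + (m:ℂ)‖
               * ‖(qz:ℂ)*((starRingEnd ℂ) α)^2 + (k:ℂ)*((starRingEnd ℂ) α) + (m:ℂ)‖) := by
    intro qz k m hqz
    have hqzne : qz ≠ 0 := ne_of_gt hqz
    have hηβ := eta_ne_zero a b hab hb ((β:ℂ)) hβc qz k m hqzne
    have hηα := eta_ne_zero a b hab hb α hαroot qz k m hqzne
    have hηᾱ := eta_ne_zero a b hab hb ((starRingEnd ℂ) α) hᾱroot qz k m hqzne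
    set NN : ℤ := m^3 + a*k*m^2 - b*k^2*m + k^3 + a^2*qz*m^2 + 2*b*qz*m^2 - a*b*qz*k*m
      - 3*qz*k*m + a*qz*k^2 + b^2*qz^2*m - 2*a*qz^2*m - b*qz^2*k + qz^3 with hNNdef
    have hNN : ((qz:ℂ)*((β:ℂ))^2 + (k:ℂ)*(β:ℂ) + (m:ℂ))
        * ((qz:ℂ)*α^2 + (k:ℂ)*α + (m:ℂ))
        * ((qz:ℂ)*((starRingEnd ℂ) α)^2 + (k:ℂ)*((starRingEnd ℂ) α) + (m:ℂ)) = (NN:ℂ) := by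
      rw [prod_eta ((β:ℂ)) α ((starRingEnd ℂ) α) (qz:ℂ) (k:ℂ) (m:ℂ), e1, e2, e3, hNNdef]
      push_cast
      ring
    have hNNne : NN ≠ 0 := by
      intro h
      rw [h] at hNN
      push_cast at hNN
      exact (mul_ne_zero (mul_ne_zero hηβ hηα) hηᾱ) hNN
    have h1abs : (1:ℝ) ≤ ‖((NN:ℤ):ℂ)‖ := by
      rw [Complex.norm_intCast]
      exact_mod_cast Int.one_le_abs hNNne
    have hconj : (qz:ℂ)*α^2 + (k:ℂ)*α + (m:ℂ)
        = (starRingEnd ℂ) ((qz:ℂ)*((starRingEnd ℂ) α)^2 + (k:ℂ)*((starRingEnd ℂ) α) + (m:ℂ)) := by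
      simp only [map_add, map_mul, map_pow, map_intCast, Complex.conj_conj]
    calc (1:ℝ) ≤ ‖((NN:ℤ):ℂ)‖ := h1abs
    _ = ‖(qz:ℂ)*((β:ℂ))^2 + (k:ℂ)*(β:ℂ) + (m:ℂ)‖
        * ‖(qz:ℂ)*α^2 + (k:ℂ)*α + (m:ℂ)‖
        * ‖(qz:ℂ)*((starRingEnd ℂ) α)^2 + (k:ℂ)*((starRingEnd ℂ) α) + (m:ℂ)‖ := by
        rw [← hNN, norm_mul, norm_mul]
    _ = _ := by rw [hconj, Complex.norm_conj]; ring
  -- interpolation upper bound on |η(β)|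
  have hwb : ∀ (qz k m : ℤ), 0 < qz →
      ‖(qz:ℂ)*((β:ℂ))^2 + (k:ℂ)*(β:ℂ) + (m:ℂ)‖
        ≤ (qz:ℝ)*S + c₂ * ‖(qz:ℂ)*((starRingEnd ℂ) α)^2
            + (k:ℂ)*((starRingEnd ℂ) α) + (m:ℂ)‖ := by
    intro qz k m hqz
    have hDne : α - (starRingEnd ℂ) α ≠ 0 := sub_ne_zero.mpr hαᾱ
    have hid : (qz:ℂ)*((β:ℂ))^2 + (k:ℂ)*(β:ℂ) + (m:ℂ)
        = (qz:ℂ)*(((β:ℂ) - α)*((β:ℂ) - (starRingEnd ℂ) α))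
          + (((qz:ℂ)*α^2 + (k:ℂ)*α + (m:ℂ))*((β:ℂ) - (starRingEnd ℂ) α)
             - ((qz:ℂ)*((starRingEnd ℂ) α)^2 + (k:ℂ)*((starRingEnd ℂ) α) + (m:ℂ))*((β:ℂ) - α))
            / (α - (starRingEnd ℂ) α) := by
      field_simp
      ring
    have hconj : (qz:ℂ)*α^2 + (k:ℂ)*α + (m:ℂ)
        = (starRingEnd ℂ) ((qz:ℂ)*((starRingEnd ℂ) α)^2 + (k:ℂ)*((starRingEnd ℂ) α) + (m:ℂ)) := by
      simp only [map_add, map_mul, map_pow, map_intCast, Complex.conj_conj]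
    set v := ‖(qz:ℂ)*((starRingEnd ℂ) α)^2 + (k:ℂ)*((starRingEnd ℂ) α) + (m:ℂ)‖ with hv
    rw [hid]
    calc ‖_‖
        ≤ ‖(qz:ℂ)*(((β:ℂ) - α)*((β:ℂ) - (starRingEnd ℂ) α))‖
          + ‖(((qz:ℂ)*α^2 + (k:ℂ)*α + (m:ℂ))*((β:ℂ) - (starRingEnd ℂ) α)
             - ((qz:ℂ)*((starRingEnd ℂ) α)^2 + (k:ℂ)*((starRingEnd ℂ) α) + (m:ℂ))*((β:ℂ) - α))
            / (α - (starRingEnd ℂ) α)‖ := norm_add_le _ _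
    _ ≤ (qz:ℝ)*S + c₂ * v := by
        have hA1' : ‖(qz:ℂ)*(((β:ℂ) - α)*((β:ℂ) - (starRingEnd ℂ) α))‖ = (qz:ℝ)*S := by
          rw [hSc, norm_mul, Complex.norm_intCast, Complex.norm_real,
            Real.norm_of_nonneg hSpos.le, abs_of_pos (by exact_mod_cast hqz : (0:ℝ) < (qz:ℝ))]
        have hX : ‖((qz:ℂ)*α^2 + (k:ℂ)*α + (m:ℂ))*((β:ℂ) - (starRingEnd ℂ) α)‖
            = v * r0 := by
          rw [norm_mul, habsβᾱ, hconj, Complex.norm_conj, ← hv]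
        have hY : ‖((qz:ℂ)*((starRingEnd ℂ) α)^2 + (k:ℂ)*((starRingEnd ℂ) α) + (m:ℂ))
            *((β:ℂ) - α)‖ = v * r0 := by
          rw [norm_mul, ← hr0, ← hv]
        have hnum : ‖(((qz:ℂ)*α^2 + (k:ℂ)*α + (m:ℂ))*((β:ℂ) - (starRingEnd ℂ) α)
             - ((qz:ℂ)*((starRingEnd ℂ) α)^2 + (k:ℂ)*((starRingEnd ℂ) α) + (m:ℂ))*((β:ℂ) - α))‖
            ≤ 2 * v * r0 := by
          rw [sub_eq_add_neg]
          refine le_trans (norm_add_le _ _) ?_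
          rw [norm_neg, hX, hY]
          linarith
        have hA2' : ‖(((qz:ℂ)*α^2 + (k:ℂ)*α + (m:ℂ))*((β:ℂ) - (starRingEnd ℂ) α)
             - ((qz:ℂ)*((starRingEnd ℂ) α)^2 + (k:ℂ)*((starRingEnd ℂ) α) + (m:ℂ))*((β:ℂ) - α))
            / (α - (starRingEnd ℂ) α)‖ ≤ c₂ * v := by
          rw [norm_div, ← hdd]
          calc _ ≤ (2 * v * r0) / dd := by gcongr
          _ = c₂ * v := by rw [hc₂]; ring
        linarith
  -- choose threshold and n₀
  have hA1 : A < 1 := hαabs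
  set u₀ := min (1/(S+1)) (min (1/(16*E+1)) (S/(8*c₂+1))) with hu₀def
  have hu₀pos : 0 < u₀ :=
    lt_min (by positivity) (lt_min (by positivity) (by positivity))
  obtain ⟨n₀, hn₀⟩ := exists_pow_lt_of_lt_one hu₀pos hA1
  refine ⟨n₀, fun n hn q hq0 hqT => ?_⟩
  set u := A^(n+2) with hu
  have hupos : 0 < u := by positivity
  have huu₀ : u < u₀ := by
    calc u ≤ A^n₀ := by
          rw [hu]
          exact pow_le_pow_of_le_one (le_of_lt hA0) (le_of_lt hA1) (by omega)
    _ < u₀ := hn₀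
  have hu1 : u ≤ 1 := by
    rw [hu]
    exact pow_le_one₀ (le_of_lt hA0) (le_of_lt hA1)
  have hm1 : u < 1/(S+1) := lt_of_lt_of_le huu₀ (min_le_left _ _)
  have hm2 : u < 1/(16*E+1) := lt_of_lt_of_le huu₀ ((min_le_right _ _).trans (min_le_left _ _))
  have hm3 : u < S/(8*c₂+1) := lt_of_lt_of_le huu₀ ((min_le_right _ _).trans (min_le_right _ _))
  have hth1 : S * u^2 ≤ 1 := by
    have h' : u * (S+1) < 1 := by
      rw [lt_div_iff₀ (by positivity)] at hm1
      linarith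
    nlinarith
  have hth2 : 16*E*u ≤ 1 := by
    have h' : u * (16*E+1) < 1 := by
      rw [lt_div_iff₀ (by positivity)] at hm2
      linarith
    nlinarith
  have hth3 : 8*c₂*u ≤ S := by
    have h' : u * (8*c₂+1) < S := by
      rw [lt_div_iff₀ (by positivity)] at hm3
      linarith
    nlinarith
  have hB : u^2 * β^(n+2) = 1 := by
    rw [hu, ← pow_mul, show (n+2)*2 = 2*(n+2) from by ring, pow_mul, ← mul_pow, hA2β, one_pow]
  have hq1R : (1:ℝ) ≤ (q:ℝ) := by exact_mod_cast hq0
  have hqSle : (q:ℝ)*S ≤ β^(n+2) - S + 2*S*E*u := by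
    have hq' : (q:ℝ) ≤ (Tseq a b n : ℝ) - 1 := by
      have h2' : q + 1 ≤ Tseq a b n := Int.lt_iff_add_one_le.mp hqT
      have h3' : (q:ℝ) + 1 ≤ (Tseq a b n : ℝ) := by exact_mod_cast h2'
      linarith
    have hT := hTle n
    have hq'' : (q:ℝ) ≤ β^(n+2)/S + 2*E*u - 1 := by rw [hu]; linarith
    have hmul := mul_le_mul_of_nonneg_right hq'' (le_of_lt hSpos)
    calc (q:ℝ)*S ≤ (β^(n+2)/S + 2*E*u - 1) * S := hmul
    _ = β^(n+2) - S + 2*S*E*u := by field_simp; ring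
  have hqSpos : 0 < (q:ℝ)*S := by
    apply mul_pos _ hSpos
    exact_mod_cast hq0
  set t := (1 + S*u^2/8)*u with ht
  -- lower bound for the competitor
  have hlb : A * t ≤ rnorm0 b β α ![(q:ℝ)/β, (q:ℝ)/β^2] := by
    unfold rnorm0
    refine le_csInf ?_ ?_
    · exact ⟨rnorm b β α (![(q:ℝ)/β, (q:ℝ)/β^2] - fun i => ((0 : Fin 2 → ℤ) i : ℝ)), 0, rfl⟩
    rintro r ⟨g, rfl⟩
    rw [hval q g]
    have hv0 : (0:ℝ) ≤ ‖(q:ℂ) * ((starRingEnd ℂ) α)^2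
        + ((b*(g 0)+(g 1) : ℤ):ℂ) * ((starRingEnd ℂ) α) + ((g 0 : ℤ):ℂ)‖ :=
      norm_nonneg _
    have hw0 : (0:ℝ) ≤ ‖(q:ℂ)*((β:ℂ))^2 + ((b*(g 0)+(g 1) : ℤ):ℂ)*(β:ℂ) + ((g 0:ℤ):ℂ)‖ :=
      norm_nonneg _
    have h1w := hlow q (b*(g 0)+(g 1)) (g 0) hq0
    have hwbb := hwb q (b*(g 0)+(g 1)) (g 0) hq0
    have hgt := v_gt_t S c₂ E u ((q:ℝ)*S) (β^(n+2)) _ _ hSpos (le_of_lt hc₂pos)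
      (le_of_lt hEpos) hupos hu1 hB hth2 hth3 hth1 hqSle hqSpos hv0 hw0 h1w hwbb
    rw [← ht] at hgt
    exact mul_le_mul_of_nonneg_left (le_of_lt hgt) (le_of_lt hA0)
  -- upper bound for T_n
  have hub2 : rnorm0 b β α ![(Tseq a b n : ℝ)/β, (Tseq a b n:ℝ)/β^2] ≤ A * u := by
    unfold rnorm0
    apply csInf_le
    · refine ⟨0, ?_⟩
      rintro r ⟨g, rfl⟩
      unfold rnorm
      exact norm_nonneg _
    · refine ⟨![Yseq a b n, Xseq a b n - b * Yseq a b n], ?_⟩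
      rw [hval (Tseq a b n) _]
      have hg0 : (![Yseq a b n, Xseq a b n - b * Yseq a b n] : Fin 2 → ℤ) 0 = Yseq a b n := rfl
      have hg1 : (![Yseq a b n, Xseq a b n - b * Yseq a b n] : Fin 2 → ℤ) 1
          = Xseq a b n - b * Yseq a b n := rfl
      rw [hg0, hg1]
      have hk : b * Yseq a b n + (Xseq a b n - b * Yseq a b n) = Xseq a b n := by ring
      rw [hk]
      have hpow := pow_eq_TXY a b ((starRingEnd ℂ) α) hᾱroot n
      rw [← hpow, habsᾱp (n+2), hu]
  -- conclude
  have hut : u < t := by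
    rw [ht]
    nlinarith [mul_pos (mul_pos hSpos (pow_pos hupos 2)) hupos]
  have hAu_lt : A * u < A * t :=
    mul_lt_mul_of_pos_left hut hA0
  calc rnorm0 b β α ![(Tseq a b n : ℝ)/β, (Tseq a b n:ℝ)/β^2] ≤ A * u := hub2
  _ < A * t := hAu_lt
  _ ≤ rnorm0 b β α ![(q:ℝ)/β, (q:ℝ)/β^2] := hlb
end

section
/- For all n ≥ 4 one has T_n = (a−1)T_{n−1} + (a+b−1)T_{n−2} + (a+b)(T_{n−3} + T_{n−4} + ⋯ + T_1) + (a+b+1)T_0. -/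
open scoped BigOperators

/-- For all `n ≥ 4`:
`T n = (a−1)T(n−1) + (a+b−1)T(n−2) + (a+b)(T(n−3) + ⋯ + T 1) + (a+b+1)T 0`. -/
theorem Tseq_expansion (a b : ℤ) (hab : -a + 1 ≤ b) (hb : b ≤ -2)
    (n : ℕ) (hn : 4 ≤ n) :
    Tseq a b n = (a - 1) * Tseq a b (n - 1) + (a + b - 1) * Tseq a b (n - 2) +
      (a + b) * (∑ i ∈ Finset.Icc 1 (n - 3), Tseq a b i) + (a + b + 1) * Tseq a b 0 := by
  obtain ⟨m, rfl⟩ : ∃ m, n = m + 4 := ⟨n - 4, by omega⟩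
  clear hn
  induction m with
  | zero =>
      show Tseq a b 4 = _
      norm_num [Tseq]
      ring
  | succ m ih =>
      have key : Tseq a b (m + 5) =
          a * Tseq a b (m + 4) + b * Tseq a b (m + 3) + Tseq a b (m + 2) := rfl
      have hsum : ∑ i ∈ Finset.Icc 1 (m + 1 + 4 - 3), Tseq a b i
          = (∑ i ∈ Finset.Icc 1 (m + 4 - 3), Tseq a b i) + Tseq a b (m + 2) := by
        have : m + 1 + 4 - 3 = (m + 1) + 1 := by omega
        rw [this, Finset.sum_Icc_succ_top (by omega)]
        congr 1
      have h1 : m + 1 + 4 - 1 = m + 4 := by omega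
      have h2 : m + 1 + 4 - 2 = m + 3 := by omega
      have h4 : m + 4 - 1 = m + 3 := by omega
      have h5 : m + 4 - 2 = m + 2 := by omega
      rw [h4, h5] at ih
      show Tseq a b (m + 5) = _
      rw [h1, h2, hsum, key]
      linear_combination ih
end

section
/- Every nonnegative integer N can be expressed as N = Σ_{i=0}^{∞} d_i T_i where (d_i)_{i≥0} is an admissible finitely supported sequence of nonnegative integers with all d_i ∈ {0, …, a−1}, and this admissible representation is unique. -/
open scoped BigOperators

namespace AdmRep


variable {a b : ℤ}

@[simp] lemma rule0 : ruleWord a b 0 = a - 1 := rfl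
@[simp] lemma rule1 : ruleWord a b 1 = a + b - 1 := rfl
@[simp] lemma rule2 (i : ℕ) : ruleWord a b (i + 2) = a + b := rfl

lemma rule_ge2 {i : ℕ} (h : 2 ≤ i) : ruleWord a b i = a + b := by
  obtain ⟨j, rfl⟩ := Nat.exists_eq_add_of_le h
  rw [Nat.add_comm]; rfl

lemma ha3 (hab : -a + 1 ≤ b) (hb : b ≤ -2) : 3 ≤ a := by linarith

lemma hab1 (hab : -a + 1 ≤ b) : 1 ≤ a + b := by linarith

lemma Tkey (hab : -a + 1 ≤ b) (hb : b ≤ -2) :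
    ∀ n : ℕ, 0 < Tseq a b n ∧ Tseq a b n < Tseq a b (n+1) ∧ Tseq a b (n+1) < Tseq a b (n+2) := by
  have ha : 3 ≤ a := ha3 hab hb
  intro n
  induction n with
  | zero =>
    refine ⟨one_pos, ?_, ?_⟩ <;> show _ < _
    · show (1:ℤ) < a; linarith
    · show a < a^2 + b; nlinarith
  | succ n ih =>
    obtain ⟨h0, h1, h2⟩ := ih
    refine ⟨by linarith, h2, ?_⟩
    show Tseq a b (n+2) < a * Tseq a b (n+2) + b * Tseq a b (n+1) + Tseq a b n
    nlinarith

lemma Tpos (hab : -a + 1 ≤ b) (hb : b ≤ -2) (n : ℕ) : 0 < Tseq a b n := (Tkey hab hb n).1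

lemma Tmono (hab : -a + 1 ≤ b) (hb : b ≤ -2) (n : ℕ) : Tseq a b n < Tseq a b (n+1) :=
  (Tkey hab hb n).2.1

lemma Tge (hab : -a + 1 ≤ b) (hb : b ≤ -2) (n : ℕ) : (n : ℤ) + 1 ≤ Tseq a b n := by
  induction n with
  | zero => show (1:ℤ) ≤ 1; exact le_refl 1
  | succ n ih => have := Tmono hab hb n; push_cast; linarith

/-- partial sums -/
def Ssum (a b : ℤ) (n : ℕ) : ℤ := ∑ i ∈ Finset.range n, Tseq a b i

lemma Ssum_nonneg (hab : -a + 1 ≤ b) (hb : b ≤ -2) (n : ℕ) : 0 ≤ Ssum a b n :=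
  Finset.sum_nonneg fun i _ => (Tpos hab hb i).le

lemma Ssum_succ (n : ℕ) : Ssum a b (n+1) = Ssum a b n + Tseq a b n := Finset.sum_range_succ _ _

lemma T_le_Ssum (hab : -a + 1 ≤ b) (hb : b ≤ -2) (n : ℕ) : Tseq a b n ≤ Ssum a b (n+1) := by
  rw [Ssum_succ]
  have := Ssum_nonneg hab hb n
  linarith

lemma maxval (hab : -a + 1 ≤ b) (hb : b ≤ -2) :
    ∀ n : ℕ, (a-1) * Tseq a b (n+1) + (a+b-1) * Tseq a b n + (a+b) * Ssum a b n + 1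
      = Tseq a b (n+2) := by
  intro n
  induction n with
  | zero =>
    show (a-1) * a + (a+b-1) * 1 + (a+b) * 0 + 1 = a^2 + b
    ring
  | succ n ih =>
    rw [Ssum_succ]
    have hrec : Tseq a b (n+3) = a * Tseq a b (n+2) + b * Tseq a b (n+1) + Tseq a b n := rfl
    rw [show n+1+2 = n+3 from rfl, hrec]
    linarith [ih]


variable {a b : ℤ}

/-- WordLe only depends on values at positions ≤ j. -/
lemma wordle_congr {d e : ℕ → ℕ} {j k : ℕ} (h : ∀ p ≤ j, d p = e p)
    (hw : WordLe a b d j k) : WordLe a b e j k := by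
  rcases hw with hl | ⟨m, hm, heq, hlt⟩
  · exact Or.inl fun i hi => (h (j - i) (Nat.sub_le _ _)) ▸ hl i hi
  · exact Or.inr ⟨m, hm, fun i hi => (h (j - i) (Nat.sub_le _ _)) ▸ heq i hi,
      (h (j - m) (Nat.sub_le _ _)) ▸ hlt⟩

lemma wordle_of_lt {d : ℕ → ℕ} {j : ℕ} (h : (d j : ℤ) < a - 1) (k : ℕ) :
    WordLe a b d j k :=
  Or.inr ⟨0, Nat.zero_le _, fun i hi => absurd hi (Nat.not_lt_zero i), by simpa using h⟩

lemma wordle_mono {d : ℕ → ℕ} {j k k' : ℕ} (hk : k' ≤ k) (hw : WordLe a b d j k) :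
    WordLe a b d j k' := by
  rcases hw with hl | ⟨m, hm, heq, hlt⟩
  · exact Or.inl fun i hi => hl i (le_trans hi hk)
  · rcases le_or_gt m k' with h | h
    · exact Or.inr ⟨m, h, heq, hlt⟩
    · exact Or.inl fun i hi => heq i (lt_of_le_of_lt hi h)

lemma wordle_digit_le (hab : -a + 1 ≤ b) (hb : b ≤ -2) {d : ℕ → ℕ} {j k : ℕ}
    (hw : WordLe a b d j k) : (d j : ℤ) ≤ a - 1 := by
  rcases hw with hl | ⟨m, hm, heq, hlt⟩
  · have := hl 0 (Nat.zero_le _); simpa using this.le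
  · rcases Nat.eq_zero_or_pos m with rfl | hm0
    · simpa using hlt.le
    · have := heq 0 hm0; simpa using this.le

/-- second digit bound -/
lemma wordle_second (hab : -a + 1 ≤ b) (hb : b ≤ -2) {d : ℕ → ℕ} {j : ℕ}
    (hw : WordLe a b d (j+1) (j+1)) (ht : (d (j+1) : ℤ) = a - 1) :
    (d j : ℤ) ≤ a + b - 1 := by
  rcases hw with hl | ⟨m, hm, heq, hlt⟩
  · have := hl 1 (by omega); simpa using this.le
  · match m, hm with
    | 0, _ => simp at hlt; omega
    | 1, _ => simpa using hlt.le
    | (m+2), hm =>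
      have := heq 1 (by omega); simpa using this.le

/-- admissibility up to position n -/
def AdmUpTo (a b : ℤ) (d : ℕ → ℕ) (n : ℕ) : Prop := ∀ j ≤ n, WordLe a b d j j

lemma admUpTo_mono {d : ℕ → ℕ} {n n' : ℕ} (h : n' ≤ n) (ha : AdmUpTo a b d n) :
    AdmUpTo a b d n' := fun j hj => ha j (le_trans hj h)

lemma admUpTo_congr {d e : ℕ → ℕ} {n : ℕ} (h : ∀ p ≤ n, d p = e p)
    (hd : AdmUpTo a b d n) : AdmUpTo a b e n :=
  fun j hj => wordle_congr (fun p hp => h p (le_trans hp hj)) (hd j hj)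

/-- run-state admissibility -/
def RunState (a b : ℤ) (d : ℕ → ℕ) (n : ℕ) : Prop :=
  (∀ i ≤ n, (d (n - i) : ℤ) = a + b) ∨
    ∃ m ≤ n, (∀ i < m, (d (n - i) : ℤ) = a + b) ∧ ((d (n - m) : ℤ) < a + b) ∧
      AdmUpTo a b d (n - m)

lemma runState_congr {d e : ℕ → ℕ} {n : ℕ} (h : ∀ p ≤ n, d p = e p)
    (hd : RunState a b d n) : RunState a b e n := by
  rcases hd with hl | ⟨m, hm, heq, hlt, hadm⟩
  · exact Or.inl fun i hi => (h (n - i) (Nat.sub_le _ _)) ▸ hl i hi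
  · exact Or.inr ⟨m, hm, fun i hi => (h (n - i) (Nat.sub_le _ _)) ▸ heq i hi,
      (h (n - m) (Nat.sub_le _ _)) ▸ hlt,
      admUpTo_congr (fun p hp => h p (le_trans hp (Nat.sub_le _ _))) hadm⟩

lemma runState_digit_le {d : ℕ → ℕ} {n : ℕ} (hr : RunState a b d n) :
    (d n : ℤ) ≤ a + b := by
  rcases hr with hl | ⟨m, hm, heq, hlt, _⟩
  · have := hl 0 (Nat.zero_le _); simpa using this.le
  · rcases Nat.eq_zero_or_pos m with rfl | hm0
    · simpa using hlt.le
    · have := heq 0 hm0; simpa using this.le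

lemma runState_to_adm (hab : -a + 1 ≤ b) (hb : b ≤ -2) {d : ℕ → ℕ} {n : ℕ}
    (hr : RunState a b d n) : AdmUpTo a b d n := by
  have hlt' : a + b < a - 1 := by linarith
  rcases hr with hl | ⟨m, hm, heq, hlt, hadm⟩
  · intro j hj
    have : (d j : ℤ) = a + b := by
      have := hl (n - j) (Nat.sub_le _ _)
      rwa [Nat.sub_sub_self hj] at this
    exact wordle_of_lt (by omega) j
  · intro j hj
    rcases le_or_gt j (n - m) with h | h
    · exact hadm j h
    · have hi : n - j < m := by omega
      have : (d j : ℤ) = a + b := by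
        have := heq (n - j) hi
        rwa [Nat.sub_sub_self hj] at this
      exact wordle_of_lt (by omega) j

/-- from run state with a+b on top, peel to get lower run state -/
lemma runState_tail {d : ℕ → ℕ} {n : ℕ} (hr : RunState a b d (n+1))
    (ht : (d (n+1) : ℤ) = a + b) : RunState a b d n := by
  rcases hr with hl | ⟨m, hm, heq, hlt, hadm⟩
  · refine Or.inl fun i hi => ?_
    have := hl (i+1) (by omega)
    rwa [show n + 1 - (i+1) = n - i by omega] at this
  · rcases Nat.eq_zero_or_pos m with rfl | hm0
    · simp at hlt; omega
    · obtain ⟨m', rfl⟩ : ∃ m', m = m' + 1 := ⟨m - 1, by omega⟩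
      refine Or.inr ⟨m', by omega, fun i hi => ?_, ?_, ?_⟩
      · have := heq (i+1) (by omega)
        rwa [show n + 1 - (i+1) = n - i by omega] at this
      · rwa [show n + 1 - (m'+1) = n - m' by omega] at hlt
      · rwa [show n + 1 - (m'+1) = n - m' by omega] at hadm

lemma runState_cons {d : ℕ → ℕ} {n : ℕ} (hr : RunState a b d n)
    (ht : (d (n+1) : ℤ) = a + b) : RunState a b d (n+1) := by
  rcases hr with hl | ⟨m, hm, heq, hlt, hadm⟩
  · refine Or.inl fun i hi => ?_
    match i with
    | 0 => simpa using ht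
    | i+1 =>
      have := hl i (by omega)
      rwa [show n + 1 - (i+1) = n - i by omega]
  · refine Or.inr ⟨m+1, by omega, fun i hi => ?_, ?_, ?_⟩
    · match i with
      | 0 => simpa using ht
      | i+1 =>
        have := heq i (by omega)
        rwa [show n + 1 - (i+1) = n - i by omega]
    · rwa [show n + 1 - (m+1) = n - m by omega]
    · rwa [show n + 1 - (m+1) = n - m by omega]

/-- run state via strict top digit -/
lemma runState_of_lt {d : ℕ → ℕ} {n : ℕ} (hlt : (d n : ℤ) < a + b)
    (hadm : AdmUpTo a b d n) : RunState a b d n :=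
  Or.inr ⟨0, Nat.zero_le _, fun i hi => absurd hi (Nat.not_lt_zero i), by simpa using hlt,
    by simpa using hadm⟩

lemma runState_strict_adm {d : ℕ → ℕ} {n : ℕ} (hr : RunState a b d n)
    (ht : (d n : ℤ) < a + b) : AdmUpTo a b d n := by
  rcases hr with hl | ⟨m, hm, heq, hlt, hadm⟩
  · have := hl 0 (Nat.zero_le _); simp at this; omega
  · rcases Nat.eq_zero_or_pos m with rfl | hm0
    · simpa using hadm
    · have := heq 0 hm0; simp at this; omega

/-- from WordLe at top with prefix (a-1)(a+b-1), extract run state below -/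
lemma prefix_run (hab : -a + 1 ≤ b) (hb : b ≤ -2) {d : ℕ → ℕ} {n : ℕ}
    (hw : WordLe a b d (n+2) (n+2)) (h0 : (d (n+2) : ℤ) = a - 1)
    (h1 : (d (n+1) : ℤ) = a + b - 1) (hadm : AdmUpTo a b d n) : RunState a b d n := by
  rcases hw with hl | ⟨m, hm, heq, hlt⟩
  · refine Or.inl fun i hi => ?_
    have := hl (i+2) (by omega)
    rwa [show n + 2 - (i+2) = n - i by omega, rule2] at this
  · match m, hm with
    | 0, _ => simp at hlt; omega
    | 1, _ => simp at hlt; omega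
    | (m+2), hm =>
      refine Or.inr ⟨m, by omega, fun i hi => ?_, ?_, ?_⟩
      · have := heq (i+2) (by omega)
        rwa [show n + 2 - (i+2) = n - i by omega, rule2] at this
      · have : (d (n + 2 - (m+2)) : ℤ) < a + b := by simpa using hlt
        rwa [show n + 2 - (m+2) = n - m by omega] at this
      · exact admUpTo_mono (Nat.sub_le _ _) hadm

/-- converse: build WordLe at top from prefix + run state -/
lemma run_prefix (hab : -a + 1 ≤ b) (hb : b ≤ -2) {d : ℕ → ℕ} {n : ℕ}
    (hr : RunState a b d n) (h0 : (d (n+2) : ℤ) = a - 1)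
    (h1 : (d (n+1) : ℤ) = a + b - 1) : WordLe a b d (n+2) (n+2) := by
  rcases hr with hl | ⟨m, hm, heq, hlt, _⟩
  · refine Or.inl fun i hi => ?_
    match i with
    | 0 => simpa using h0
    | 1 => simpa using h1
    | (i+2) =>
      have := hl i (by omega)
      rw [show n + 2 - (i+2) = n - i by omega, rule2]
      exact this
  · refine Or.inr ⟨m+2, by omega, fun i hi => ?_, ?_⟩
    · match i with
      | 0 => simpa using h0
      | 1 => simpa using h1
      | (i+2) =>
        have := heq i (by omega)
        rw [show n + 2 - (i+2) = n - i by omega, rule2]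
        exact this
    · rw [show n + 2 - (m+2) = n - m by omega, rule_ge2 (by omega)]
      exact hlt


/-- value of the digit word on positions 0..n -/
def valF (a b : ℤ) (d : ℕ → ℕ) (n : ℕ) : ℤ :=
  ∑ i ∈ Finset.range (n+1), (d i : ℤ) * Tseq a b i

variable {a b : ℤ}

lemma valF_succ (d : ℕ → ℕ) (n : ℕ) :
    valF a b d (n+1) = valF a b d n + (d (n+1) : ℤ) * Tseq a b (n+1) :=
  Finset.sum_range_succ _ _

lemma valF_zero (d : ℕ → ℕ) : valF a b d 0 = (d 0 : ℤ) := by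
  show ∑ i ∈ Finset.range 1, (d i : ℤ) * Tseq a b i = (d 0 : ℤ)
  rw [Finset.sum_range_one]
  show (d 0 : ℤ) * 1 = _
  ring

lemma valF_congr {d e : ℕ → ℕ} {n : ℕ} (h : ∀ p ≤ n, d p = e p) :
    valF a b d n = valF a b e n :=
  Finset.sum_congr rfl fun i hi => by
    rw [h i (by simpa [Nat.lt_succ_iff] using hi)]

lemma valF_nonneg (hab : -a + 1 ≤ b) (hb : b ≤ -2) (d : ℕ → ℕ) (n : ℕ) :
    0 ≤ valF a b d n :=
  Finset.sum_nonneg fun i _ => mul_nonneg (Int.natCast_nonneg _) (Tpos hab hb i).le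

/-- the six-fold induction statement -/
def Pn (a b : ℤ) (n : ℕ) : Prop :=
  (∀ N : ℤ, 0 ≤ N → N < Tseq a b (n+1) →
    ∃ d : ℕ → ℕ, (∀ i, n < i → d i = 0) ∧ AdmUpTo a b d n ∧ valF a b d n = N) ∧
  (∀ d : ℕ → ℕ, AdmUpTo a b d n → valF a b d n < Tseq a b (n+1)) ∧
  (∀ d e : ℕ → ℕ, AdmUpTo a b d n → AdmUpTo a b e n →
    valF a b d n = valF a b e n → ∀ i ≤ n, d i = e i) ∧
  (∀ N : ℤ, 0 ≤ N → N ≤ (a+b) * Ssum a b (n+1) →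
    ∃ d : ℕ → ℕ, (∀ i, n < i → d i = 0) ∧ RunState a b d n ∧ valF a b d n = N) ∧
  (∀ d : ℕ → ℕ, RunState a b d n → valF a b d n ≤ (a+b) * Ssum a b (n+1)) ∧
  (∀ d e : ℕ → ℕ, RunState a b d n → RunState a b e n →
    valF a b d n = valF a b e n → ∀ i ≤ n, d i = e i)

lemma base0 (hab : -a + 1 ≤ b) (hb : b ≤ -2) : Pn a b 0 := by
  have ha : 3 ≤ a := ha3 hab hb
  have hT1 : Tseq a b 1 = a := rfl
  have hT0 : Tseq a b 0 = 1 := rfl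
  have hS1 : Ssum a b 1 = 1 := by simp [Ssum, hT0]
  refine ⟨?_, ?_, ?_, ?_, ?_, ?_⟩
  · intro N h0 h1
    rw [hT1] at h1
    refine ⟨fun i => if i = 0 then N.toNat else 0, fun i hi => by simp [show i ≠ 0 by omega], ?_, ?_⟩
    · intro j hj
      interval_cases j
      have hN : ((N.toNat : ℤ)) = N := Int.toNat_of_nonneg h0
      rcases eq_or_lt_of_le (show N ≤ a - 1 by omega) with he | hl
      · exact Or.inl fun i hi => by interval_cases i; simp [hN]; omega
      · exact wordle_of_lt (by simp [hN]; omega) 0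
    · rw [valF_zero]; simp [Int.toNat_of_nonneg h0]
  · intro d hadm
    have := wordle_digit_le hab hb (hadm 0 le_rfl)
    rw [valF_zero, hT1]; omega
  · intro d e hd he hval i hi
    interval_cases i
    rw [valF_zero, valF_zero] at hval
    exact_mod_cast hval
  · intro N h0 h1
    rw [hS1, mul_one] at h1
    refine ⟨fun i => if i = 0 then N.toNat else 0, fun i hi => by simp [show i ≠ 0 by omega], ?_, ?_⟩
    · have hN : ((N.toNat : ℤ)) = N := Int.toNat_of_nonneg h0
      rcases eq_or_lt_of_le h1 with he | hl
      · exact Or.inl fun i hi => by interval_cases i; simp [hN]; omega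
      · refine runState_of_lt (by simp [hN]; omega) ?_
        intro j hj; interval_cases j
        exact wordle_of_lt (by simp [hN]; omega) 0
    · rw [valF_zero]; simp [Int.toNat_of_nonneg h0]
  · intro d hr
    have := runState_digit_le hr
    rw [valF_zero, hS1]; omega
  · intro d e hd he hval i hi
    interval_cases i
    rw [valF_zero, valF_zero] at hval
    exact_mod_cast hval


variable {a b : ℤ}

lemma wordle00 {d : ℕ → ℕ} (h : (d 0 : ℤ) ≤ a - 1) : WordLe a b d 0 0 := by
  rcases eq_or_lt_of_le h with he | hl
  · exact Or.inl fun i hi => by interval_cases i; simpa using he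
  · exact wordle_of_lt hl 0

lemma valF_one (d : ℕ → ℕ) : valF a b d 1 = (d 0 : ℤ) + (d 1 : ℤ) * a := by
  rw [show (1:ℕ) = 0 + 1 from rfl, valF_succ, valF_zero]; rfl

set_option maxHeartbeats 1000000 in
lemma base1 (hab : -a + 1 ≤ b) (hb : b ≤ -2) : Pn a b 1 := by
  have ha : 3 ≤ a := ha3 hab hb
  have hT2 : Tseq a b 2 = a^2 + b := rfl
  have hT1 : Tseq a b 1 = a := rfl
  have hS2 : Ssum a b 2 = 1 + a := by
    rw [show (2:ℕ) = 1 + 1 from rfl, Ssum_succ]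
    simp [Ssum, hT1]
    rfl
  have hapos : (0:ℤ) < a := by omega
  obtain ⟨A1, hA1⟩ : ∃ m : ℕ, (m : ℤ) = a - 1 := ⟨(a-1).toNat, Int.toNat_of_nonneg (by omega)⟩
  obtain ⟨AB, hAB⟩ : ∃ m : ℕ, (m : ℤ) = a + b := ⟨(a+b).toNat, Int.toNat_of_nonneg (by omega)⟩
  obtain ⟨AB1, hAB1⟩ : ∃ m : ℕ, (m : ℤ) = a + b - 1 := ⟨(a+b-1).toNat, Int.toNat_of_nonneg (by omega)⟩
  refine ⟨?_, ?_, ?_, ?_, ?_, ?_⟩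
  · -- E-existence
    intro N h0 h1
    rw [hT2] at h1
    rcases lt_or_ge N ((a-1) * a) with hc | hc
    · set c := N / a with hcdef
      set r := N % a with hrdef
      have hr0 : 0 ≤ r := Int.emod_nonneg N (by omega)
      have hra : r < a := Int.emod_lt_of_pos N hapos
      have hdiv : a * c + r = N := Int.mul_ediv_add_emod N a
      have hc0 : 0 ≤ c := Int.ediv_nonneg h0 hapos.le
      have hcb : c < a - 1 := by nlinarith
      refine ⟨fun i => if i = 1 then c.toNat else if i = 0 then r.toNat else 0,
        fun i hi => by simp [show i ≠ 1 by omega, show i ≠ 0 by omega], ?_, ?_⟩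
      · intro j hj
        interval_cases j
        · exact wordle00 (by simp [Int.toNat_of_nonneg hr0]; omega)
        · exact wordle_of_lt (by simp [Int.toNat_of_nonneg hc0]; omega) 1
      · rw [valF_one]; simp [Int.toNat_of_nonneg hr0, Int.toNat_of_nonneg hc0]; linarith
    · set r := N - (a-1) * a with hrdef
      have hr0 : 0 ≤ r := by omega
      have hrb : r < a + b := by nlinarith
      refine ⟨fun i => if i = 1 then A1 else if i = 0 then r.toNat else 0,
        fun i hi => by simp [show i ≠ 1 by omega, show i ≠ 0 by omega], ?_, ?_⟩
      · have hd1 : ((A1 : ℤ)) = a - 1 := hA1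
        have hd0 : ((r.toNat : ℤ)) = r := Int.toNat_of_nonneg hr0
        intro j hj
        interval_cases j
        · exact wordle00 (by simp [hd0]; omega)
        · rcases eq_or_lt_of_le (show r ≤ a + b - 1 by omega) with he | hl
          · refine Or.inl fun i hi => ?_
            interval_cases i
            · simpa using hd1
            · simp [hd0]; omega
          · refine Or.inr ⟨1, le_rfl, fun i hi => ?_, ?_⟩
            · interval_cases i; simpa using hd1
            · simp [hd0]; omega
      · rw [valF_one]
        simp [Int.toNat_of_nonneg hr0, hA1]
        push_cast
        linarith
  · -- E-bound
    intro d hadm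
    have h1 : (d 1 : ℤ) ≤ a - 1 := wordle_digit_le hab hb (hadm 1 le_rfl)
    have h0 : (d 0 : ℤ) ≤ a - 1 := wordle_digit_le hab hb (hadm 0 (by omega))
    rw [valF_one, hT2]
    rcases eq_or_lt_of_le h1 with he | hl
    · have := wordle_second hab hb (hadm 1 le_rfl) he
      nlinarith
    · nlinarith
  · -- E-uniqueness
    intro d e hd he hval i hi
    have key : ∀ f g : ℕ → ℕ, AdmUpTo a b f 1 → AdmUpTo a b g 1 →
        valF a b f 1 = valF a b g 1 → ¬ ((f 1 : ℤ) < (g 1 : ℤ)) := by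
      intro f g hf hg hv hlt
      have hf0 : (f 0 : ℤ) ≤ a - 1 := wordle_digit_le hab hb (hf 0 (by omega))
      have hg0 : (0:ℤ) ≤ g 0 := Int.natCast_nonneg _
      rw [valF_one, valF_one] at hv
      nlinarith
    have h1 : (d 1 : ℤ) = (e 1 : ℤ) := by
      rcases lt_trichotomy ((d 1 : ℤ)) ((e 1 : ℤ)) with h | h | h
      · exact absurd h (key d e hd he hval)
      · exact h
      · exact absurd h (key e d he hd hval.symm)
    have h0 : (d 0 : ℤ) = (e 0 : ℤ) := by
      rw [valF_one, valF_one] at hval; nlinarith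
    interval_cases i
    · exact_mod_cast h0
    · exact_mod_cast h1
  · -- R-existence
    intro N h0 h1
    rw [hS2] at h1
    rcases lt_or_ge N ((a+b) * a) with hc | hc
    · set c := N / a with hcdef
      set r := N % a with hrdef
      have hr0 : 0 ≤ r := Int.emod_nonneg N (by omega)
      have hra : r < a := Int.emod_lt_of_pos N hapos
      have hdiv : a * c + r = N := Int.mul_ediv_add_emod N a
      have hc0 : 0 ≤ c := Int.ediv_nonneg h0 hapos.le
      have hcb : c < a + b := by nlinarith
      refine ⟨fun i => if i = 1 then c.toNat else if i = 0 then r.toNat else 0,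
        fun i hi => by simp [show i ≠ 1 by omega, show i ≠ 0 by omega], ?_, ?_⟩
      · refine runState_of_lt (by simp [Int.toNat_of_nonneg hc0]; omega) ?_
        intro j hj
        interval_cases j
        · exact wordle00 (by simp [Int.toNat_of_nonneg hr0]; omega)
        · exact wordle_of_lt (by simp [Int.toNat_of_nonneg hc0]; omega) 1
      · rw [valF_one]; simp [Int.toNat_of_nonneg hr0, Int.toNat_of_nonneg hc0]; linarith
    · set r := N - (a+b) * a with hrdef
      have hr0 : 0 ≤ r := by omega
      have hrb : r ≤ a + b := by nlinarith
      refine ⟨fun i => if i = 1 then AB else if i = 0 then r.toNat else 0,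
        fun i hi => by simp [show i ≠ 1 by omega, show i ≠ 0 by omega], ?_, ?_⟩
      · have hd1 : ((AB : ℤ)) = a + b := hAB
        have hd0 : ((r.toNat : ℤ)) = r := Int.toNat_of_nonneg hr0
        rcases eq_or_lt_of_le hrb with he | hl
        · refine Or.inl fun i hi => ?_
          interval_cases i
          · simpa using hd1
          · simp [hd0]; omega
        · refine runState_cons (runState_of_lt (by simp [hd0]; omega) ?_) (by simpa using hd1)
          intro j hj
          interval_cases j
          exact wordle00 (by simp [hd0]; omega)
      · rw [valF_one]
        simp [Int.toNat_of_nonneg hr0, hAB]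
        push_cast
        linarith
  · -- R-bound
    intro d hr
    have h1 : (d 1 : ℤ) ≤ a + b := runState_digit_le hr
    rw [valF_one, hS2]
    rcases eq_or_lt_of_le h1 with he | hl
    · have h0 : (d 0 : ℤ) ≤ a + b := runState_digit_le (runState_tail hr he)
      nlinarith
    · have hadm := runState_strict_adm hr hl
      have h0 : (d 0 : ℤ) ≤ a - 1 := wordle_digit_le hab hb (hadm 0 (by omega))
      nlinarith
  · -- R-uniqueness
    intro d e hd he hval i hi
    have key : ∀ f g : ℕ → ℕ, RunState a b f 1 → RunState a b g 1 →
        valF a b f 1 = valF a b g 1 → ¬ ((f 1 : ℤ) < (g 1 : ℤ)) := by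
      intro f g hf hg hv hlt
      have hg1 : (g 1 : ℤ) ≤ a + b := runState_digit_le hg
      have hf1 : (f 1 : ℤ) < a + b := lt_of_lt_of_le hlt hg1
      have hf0 : (f 0 : ℤ) ≤ a - 1 :=
        wordle_digit_le hab hb ((runState_strict_adm hf hf1) 0 (by omega))
      have hg0 : (0:ℤ) ≤ g 0 := Int.natCast_nonneg _
      rw [valF_one, valF_one] at hv
      nlinarith
    have h1 : (d 1 : ℤ) = (e 1 : ℤ) := by
      rcases lt_trichotomy ((d 1 : ℤ)) ((e 1 : ℤ)) with h | h | h
      · exact absurd h (key d e hd he hval)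
      · exact h
      · exact absurd h (key e d he hd hval.symm)
    have h0 : (d 0 : ℤ) = (e 0 : ℤ) := by
      rw [valF_one, valF_one] at hval; nlinarith
    interval_cases i
    · exact_mod_cast h0
    · exact_mod_cast h1


variable {a b : ℤ}

set_option maxHeartbeats 1000000 in
lemma step (hab : -a + 1 ≤ b) (hb : b ≤ -2) (n : ℕ)
    (IH0 : Pn a b n) (IH1 : Pn a b (n+1)) : Pn a b (n+2) := by
  obtain ⟨Eex0, Ebd0, Equ0, Rex0, Rbd0, Rqu0⟩ := IH0
  obtain ⟨Eex1, Ebd1, Equ1, Rex1, Rbd1, Rqu1⟩ := IH1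
  have ha : 3 ≤ a := ha3 hab hb
  have hT2 : 0 < Tseq a b (n+2) := Tpos hab hb (n+2)
  have hT1 : 0 < Tseq a b (n+1) := Tpos hab hb (n+1)
  have hS1 : 0 ≤ Ssum a b (n+1) := Ssum_nonneg hab hb (n+1)
  have hmax : (a-1) * Tseq a b (n+2) + (a+b-1) * Tseq a b (n+1)
      + (a+b) * Ssum a b (n+1) + 1 = Tseq a b (n+3) := maxval hab hb (n+1)
  simp only [show n+1+1 = n+2 from rfl] at Eex1 Ebd1 Equ1 Rex1 Rbd1 Rqu1
  obtain ⟨A1, hA1⟩ : ∃ m : ℕ, (m : ℤ) = a - 1 := ⟨(a-1).toNat, Int.toNat_of_nonneg (by omega)⟩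
  obtain ⟨AB, hAB⟩ : ∃ m : ℕ, (m : ℤ) = a + b := ⟨(a+b).toNat, Int.toNat_of_nonneg (by omega)⟩
  obtain ⟨AB1, hAB1⟩ : ∃ m : ℕ, (m : ℤ) = a + b - 1 := ⟨(a+b-1).toNat, Int.toNat_of_nonneg (by omega)⟩
  refine ⟨?_, ?_, ?_, ?_, ?_, ?_⟩
  · -- E-existence
    intro N h0 h1
    rw [show n+2+1 = n+3 from rfl] at h1
    rcases lt_or_ge N ((a-1) * Tseq a b (n+2)) with hc1 | hc1
    · -- top digit < a-1
      set c := N / Tseq a b (n+2) with hcdef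
      set r := N % Tseq a b (n+2) with hrdef
      have hr0 : 0 ≤ r := Int.emod_nonneg N hT2.ne'
      have hrlt : r < Tseq a b (n+2) := Int.emod_lt_of_pos N hT2
      have hdiv : Tseq a b (n+2) * c + r = N := Int.mul_ediv_add_emod N _
      have hc0 : 0 ≤ c := Int.ediv_nonneg h0 hT2.le
      have hcb : c < a - 1 := by nlinarith
      obtain ⟨d', hsup', hadm', hval'⟩ := Eex1 r hr0 hrlt
      refine ⟨fun i => if i = n+2 then c.toNat else d' i,
        fun i hi => by simp only [if_neg (by omega : i ≠ n+2)]; exact hsup' i (by omega), ?_, ?_⟩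
      · intro j hj
        rcases Nat.lt_or_ge j (n+2) with h | h
        · exact wordle_congr (fun p hp => by simp [show p ≠ n+2 by omega]) (hadm' j (by omega))
        · have hj2 : j = n + 2 := by omega
          subst hj2
          exact wordle_of_lt (by simp [Int.toNat_of_nonneg hc0]; omega) _
      · rw [valF_succ, valF_congr (fun p hp => by simp [show p ≠ n+2 by omega] : ∀ p ≤ n+1, _ = d' p),
          hval']
        simp [Int.toNat_of_nonneg hc0]
        linarith
    · rcases lt_or_ge N ((a-1) * Tseq a b (n+2) + (a+b-1) * Tseq a b (n+1)) with hc2 | hc2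
      · -- second digit < a+b-1
        set M := N - (a-1) * Tseq a b (n+2) with hMdef
        have hM0 : 0 ≤ M := by omega
        have hMlt : M < (a+b-1) * Tseq a b (n+1) := by omega
        set c := M / Tseq a b (n+1) with hcdef
        set r := M % Tseq a b (n+1) with hrdef
        have hr0 : 0 ≤ r := Int.emod_nonneg M hT1.ne'
        have hrlt : r < Tseq a b (n+1) := Int.emod_lt_of_pos M hT1
        have hdiv : Tseq a b (n+1) * c + r = M := Int.mul_ediv_add_emod M _
        have hc0 : 0 ≤ c := Int.ediv_nonneg hM0 hT1.le
        have hcb : c < a + b - 1 := by nlinarith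
        obtain ⟨d', hsup', hadm', hval'⟩ := Eex0 r hr0 hrlt
        refine ⟨fun i => if i = n+2 then A1 else if i = n+1 then c.toNat else d' i,
          fun i hi => by
            simp only [if_neg (by omega : i ≠ n+2), if_neg (by omega : i ≠ n+1)]
            exact hsup' i (by omega), ?_, ?_⟩
        · have hgd2 : ((A1 : ℤ)) = a - 1 := hA1
          have hgd1 : ((c.toNat : ℤ)) = c := Int.toNat_of_nonneg hc0
          intro j hj
          rcases Nat.lt_or_ge j (n+1) with h | h
          · exact wordle_congr
              (fun p hp => by simp [show p ≠ n+2 by omega, show p ≠ n+1 by omega])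
              (hadm' j (by omega))
          · rcases Nat.lt_or_ge j (n+2) with h' | h'
            · have hj1 : j = n + 1 := by omega
              subst hj1
              exact wordle_of_lt (by simp [show ¬ (n+1 = n+2) by omega, hgd1]; omega) _
            · have hj2 : j = n + 2 := by omega
              subst hj2
              refine Or.inr ⟨1, by omega, fun i hi => ?_, ?_⟩
              · interval_cases i
                simpa using hgd2
              · rw [rule1]
                have : n + 2 - 1 = n + 1 := by omega
                rw [this]
                simp [show ¬ (n+1 = n+2) by omega, hgd1]
                omega
        · rw [valF_succ, valF_succ,
            valF_congr (fun p hp => by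
              simp [show p ≠ n+2 by omega, show p ≠ n+1 by omega] : ∀ p ≤ n, _ = d' p),
            hval']
          simp [show ¬ (n+1 = n+2) by omega, Int.toNat_of_nonneg hc0,
            hA1]
          linarith
      · -- prefix (a-1)(a+b-1) then run
        set M := N - (a-1) * Tseq a b (n+2) - (a+b-1) * Tseq a b (n+1) with hMdef
        have hM0 : 0 ≤ M := by omega
        have hMle : M ≤ (a+b) * Ssum a b (n+1) := by omega
        obtain ⟨e, hsup', hrun', hval'⟩ := Rex0 M hM0 hMle
        refine ⟨fun i => if i = n+2 then A1 else if i = n+1 then AB1 else e i,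
          fun i hi => by
            simp only [if_neg (by omega : i ≠ n+2), if_neg (by omega : i ≠ n+1)]
            exact hsup' i (by omega), ?_, ?_⟩
        · have hgd2 : ((A1 : ℤ)) = a - 1 := hA1
          have hgd1 : ((AB1 : ℤ)) = a + b - 1 := hAB1
          have hagree : ∀ p ≤ n, e p =
              (fun i => if i = n+2 then A1 else if i = n+1 then AB1 else e i) p :=
            fun p hp => by simp [show p ≠ n+2 by omega, show p ≠ n+1 by omega]
          have hrun : RunState a b
              (fun i => if i = n+2 then A1 else if i = n+1 then AB1 else e i) n :=
            runState_congr hagree hrun'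
          intro j hj
          rcases Nat.lt_or_ge j (n+1) with h | h
          · exact (runState_to_adm hab hb hrun) j (by omega)
          · rcases Nat.lt_or_ge j (n+2) with h' | h'
            · have hj1 : j = n + 1 := by omega
              subst hj1
              exact wordle_of_lt (by simp [show ¬ (n+1 = n+2) by omega, hgd1]; omega) _
            · have hj2 : j = n + 2 := by omega
              subst hj2
              refine run_prefix hab hb hrun ?_ ?_
              · simpa using hgd2
              · simp [show ¬ (n+1 = n+2) by omega]
                exact hgd1
        · rw [valF_succ, valF_succ,
            valF_congr (fun p hp => by
              simp [show p ≠ n+2 by omega, show p ≠ n+1 by omega] : ∀ p ≤ n, _ = e p),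
            hval']
          simp [show ¬ (n+1 = n+2) by omega, hAB1,
            hA1]
          linarith
  · -- E-bound
    intro d hadm
    have htop : (d (n+2) : ℤ) ≤ a - 1 := wordle_digit_le hab hb (hadm (n+2) le_rfl)
    rw [valF_succ, valF_succ]
    rcases eq_or_lt_of_le htop with he | hlt
    · have hsec : (d (n+1) : ℤ) ≤ a + b - 1 := wordle_second hab hb (hadm (n+2) le_rfl) he
      rcases eq_or_lt_of_le hsec with he1 | hlt1
      · have hrun : RunState a b d n :=
          prefix_run hab hb (hadm (n+2) le_rfl) he he1 (admUpTo_mono (by omega) hadm)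
        have hbd := Rbd0 d hrun
        nlinarith
      · have hbd := Ebd0 d (admUpTo_mono (by omega) hadm)
        have hmul : (d (n+1) : ℤ) * Tseq a b (n+1) ≤ (a+b-2) * Tseq a b (n+1) :=
          mul_le_mul_of_nonneg_right (by omega) hT1.le
        nlinarith
    · have hbd := Ebd1 d (admUpTo_mono (by omega) hadm)
      rw [valF_succ] at hbd
      have hmul : (d (n+2) : ℤ) * Tseq a b (n+2) ≤ (a-2) * Tseq a b (n+2) :=
        mul_le_mul_of_nonneg_right (by omega) hT2.le
      have hpos1 : 0 ≤ (a+b-1) * Tseq a b (n+1) :=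
        mul_nonneg (by omega) hT1.le
      nlinarith
  · -- E-uniqueness
    intro d e hd he hval i hi
    have key : ∀ f g : ℕ → ℕ, AdmUpTo a b f (n+2) → AdmUpTo a b g (n+2) →
        valF a b f (n+2) = valF a b g (n+2) → ¬ ((f (n+2) : ℤ) < (g (n+2) : ℤ)) := by
      intro f g hf hg hv hlt
      have hbf := Ebd1 f (admUpTo_mono (by omega) hf)
      have h0g : 0 ≤ valF a b g (n+1) := valF_nonneg hab hb g (n+1)
      have hv2 : valF a b f (n+1) + (f (n+2) : ℤ) * Tseq a b (n+2)
          = valF a b g (n+1) + (g (n+2) : ℤ) * Tseq a b (n+2) :=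
        (valF_succ f (n+1)).symm.trans (hv.trans (valF_succ g (n+1)))
      nlinarith [hv2]
    have h2 : (d (n+2) : ℤ) = (e (n+2) : ℤ) := by
      rcases lt_trichotomy ((d (n+2) : ℤ)) ((e (n+2) : ℤ)) with h | h | h
      · exact absurd h (key d e hd he hval)
      · exact h
      · exact absurd h (key e d he hd hval.symm)
    have hval1 : valF a b d (n+1) = valF a b e (n+1) := by
      have hv2 : valF a b d (n+1) + (d (n+2) : ℤ) * Tseq a b (n+2)
          = valF a b e (n+1) + (e (n+2) : ℤ) * Tseq a b (n+2) :=
        (valF_succ d (n+1)).symm.trans (hval.trans (valF_succ e (n+1)))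
      rw [h2] at hv2
      linarith [hv2]
    have key1 : ∀ f g : ℕ → ℕ, AdmUpTo a b f (n+1) → AdmUpTo a b g (n+1) →
        valF a b f (n+1) = valF a b g (n+1) → ¬ ((f (n+1) : ℤ) < (g (n+1) : ℤ)) := by
      intro f g hf hg hv hlt
      have hbf := Ebd0 f (admUpTo_mono (by omega) hf)
      have h0g : 0 ≤ valF a b g n := valF_nonneg hab hb g n
      have hv2 : valF a b f n + (f (n+1) : ℤ) * Tseq a b (n+1)
          = valF a b g n + (g (n+1) : ℤ) * Tseq a b (n+1) :=
        (valF_succ f n).symm.trans (hv.trans (valF_succ g n))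
      nlinarith [hv2]
    have hd1 : AdmUpTo a b d (n+1) := admUpTo_mono (by omega) hd
    have he1 : AdmUpTo a b e (n+1) := admUpTo_mono (by omega) he
    have h1 : (d (n+1) : ℤ) = (e (n+1) : ℤ) := by
      rcases lt_trichotomy ((d (n+1) : ℤ)) ((e (n+1) : ℤ)) with h | h | h
      · exact absurd h (key1 d e hd1 he1 hval1)
      · exact h
      · exact absurd h (key1 e d he1 hd1 hval1.symm)
    have hval0 : valF a b d n = valF a b e n := by
      have hv2 : valF a b d n + (d (n+1) : ℤ) * Tseq a b (n+1)
          = valF a b e n + (e (n+1) : ℤ) * Tseq a b (n+1) :=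
        (valF_succ d n).symm.trans (hval1.trans (valF_succ e n))
      rw [h1] at hv2
      linarith [hv2]
    rcases Nat.lt_or_ge i (n+1) with h | h
    · exact Equ0 d e (admUpTo_mono (by omega) hd) (admUpTo_mono (by omega) he) hval0 i (by omega)
    · rcases Nat.lt_or_ge i (n+2) with h' | h'
      · have : i = n+1 := by omega
        subst this; exact_mod_cast h1
      · have : i = n+2 := by omega
        subst this; exact_mod_cast h2
  · -- R-existence
    intro N h0 h1
    rw [show n+2+1 = n+3 from rfl] at h1
    have hSs : Ssum a b (n+3) = Ssum a b (n+2) + Tseq a b (n+2) := Ssum_succ (n+2)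
    rcases lt_or_ge N ((a+b) * Tseq a b (n+2)) with hc1 | hc1
    · set c := N / Tseq a b (n+2) with hcdef
      set r := N % Tseq a b (n+2) with hrdef
      have hr0 : 0 ≤ r := Int.emod_nonneg N hT2.ne'
      have hrlt : r < Tseq a b (n+2) := Int.emod_lt_of_pos N hT2
      have hdiv : Tseq a b (n+2) * c + r = N := Int.mul_ediv_add_emod N _
      have hc0 : 0 ≤ c := Int.ediv_nonneg h0 hT2.le
      have hcb : c < a + b := by nlinarith
      obtain ⟨d', hsup', hadm', hval'⟩ := Eex1 r hr0 hrlt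
      refine ⟨fun i => if i = n+2 then c.toNat else d' i,
        fun i hi => by simp only [if_neg (by omega : i ≠ n+2)]; exact hsup' i (by omega), ?_, ?_⟩
      · refine runState_of_lt (by simp [Int.toNat_of_nonneg hc0]; omega) ?_
        intro j hj
        rcases Nat.lt_or_ge j (n+2) with h | h
        · exact wordle_congr (fun p hp => by simp [show p ≠ n+2 by omega]) (hadm' j (by omega))
        · have hj2 : j = n + 2 := by omega
          subst hj2
          exact wordle_of_lt (by simp [Int.toNat_of_nonneg hc0]; omega) _
      · rw [valF_succ, valF_congr (fun p hp => by simp [show p ≠ n+2 by omega] : ∀ p ≤ n+1, _ = d' p),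
          hval']
        simp [Int.toNat_of_nonneg hc0]
        linarith
    · set M := N - (a+b) * Tseq a b (n+2) with hMdef
      have hM0 : 0 ≤ M := by omega
      have hMle : M ≤ (a+b) * Ssum a b (n+2) := by rw [hSs] at h1; nlinarith
      obtain ⟨e, hsup', hrun', hval'⟩ := Rex1 M hM0 hMle
      refine ⟨fun i => if i = n+2 then AB else e i,
        fun i hi => by simp only [if_neg (by omega : i ≠ n+2)]; exact hsup' i (by omega), ?_, ?_⟩
      · refine runState_cons
          (runState_congr (fun p hp => by simp [show p ≠ n+2 by omega]) hrun') ?_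
        simp [hAB]
      · rw [valF_succ,
          valF_congr (fun p hp => by simp [show p ≠ n+2 by omega] : ∀ p ≤ n+1, _ = e p), hval']
        simp [hAB]
        linarith
  · -- R-bound
    intro d hr
    have hSs : Ssum a b (n+3) = Ssum a b (n+2) + Tseq a b (n+2) := Ssum_succ (n+2)
    have htop : (d (n+2) : ℤ) ≤ a + b := runState_digit_le hr
    rw [valF_succ]
    rcases eq_or_lt_of_le htop with he | hlt
    · have hbd := Rbd1 d (runState_tail hr he)
      nlinarith
    · have hadm := runState_strict_adm hr hlt
      have hbd := Ebd1 d (admUpTo_mono (by omega) hadm)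
      have hmul : (d (n+2) : ℤ) * Tseq a b (n+2) ≤ (a+b-1) * Tseq a b (n+2) :=
        mul_le_mul_of_nonneg_right (by omega) hT2.le
      have hTS : Tseq a b (n+2) ≤ Ssum a b (n+3) := T_le_Ssum hab hb (n+2)
      nlinarith
  · -- R-uniqueness
    intro d e hd he hval i hi
    have key : ∀ f g : ℕ → ℕ, RunState a b f (n+2) → RunState a b g (n+2) →
        valF a b f (n+2) = valF a b g (n+2) → ¬ ((f (n+2) : ℤ) < (g (n+2) : ℤ)) := by
      intro f g hf hg hv hlt
      have hfa : (f (n+2) : ℤ) < a + b := lt_of_lt_of_le hlt (runState_digit_le hg)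
      have hbf := Ebd1 f (admUpTo_mono (by omega) (runState_strict_adm hf hfa))
      have h0g : 0 ≤ valF a b g (n+1) := valF_nonneg hab hb g (n+1)
      have hv2 : valF a b f (n+1) + (f (n+2) : ℤ) * Tseq a b (n+2)
          = valF a b g (n+1) + (g (n+2) : ℤ) * Tseq a b (n+2) :=
        (valF_succ f (n+1)).symm.trans (hv.trans (valF_succ g (n+1)))
      nlinarith [hv2]
    have h2 : (d (n+2) : ℤ) = (e (n+2) : ℤ) := by
      rcases lt_trichotomy ((d (n+2) : ℤ)) ((e (n+2) : ℤ)) with h | h | h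
      · exact absurd h (key d e hd he hval)
      · exact h
      · exact absurd h (key e d he hd hval.symm)
    have hval1 : valF a b d (n+1) = valF a b e (n+1) := by
      have hv2 : valF a b d (n+1) + (d (n+2) : ℤ) * Tseq a b (n+2)
          = valF a b e (n+1) + (e (n+2) : ℤ) * Tseq a b (n+2) :=
        (valF_succ d (n+1)).symm.trans (hval.trans (valF_succ e (n+1)))
      rw [h2] at hv2
      linarith [hv2]
    rcases Nat.lt_or_ge i (n+2) with h | h
    · rcases eq_or_lt_of_le (runState_digit_le hd) with hetop | hlt
      · have hetop' : (e (n+2) : ℤ) = a + b := by omega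
        exact Rqu1 d e (runState_tail hd hetop) (runState_tail he hetop') hval1 i (by omega)
      · have hlt' : (e (n+2) : ℤ) < a + b := by omega
        exact Equ1 d e (admUpTo_mono (by omega) (runState_strict_adm hd hlt))
          (admUpTo_mono (by omega) (runState_strict_adm he hlt')) hval1 i (by omega)
    · have : i = n+2 := by omega
      subst this; exact_mod_cast h2

lemma Pall (hab : -a + 1 ≤ b) (hb : b ≤ -2) : ∀ n, Pn a b n := by
  have key : ∀ n, Pn a b n ∧ Pn a b (n+1) := by
    intro n
    induction n with
    | zero => exact ⟨base0 hab hb, base1 hab hb⟩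
    | succ n ih => exact ⟨ih.2, step hab hb n ih.1 ih.2⟩
  exact fun n => (key n).1

end AdmRep

namespace AdmRep

variable {a b : ℤ}

lemma valF_extend {d : ℕ → ℕ} {n m : ℕ} (hsup : ∀ i, n < i → d i = 0) (h : n ≤ m) :
    valF a b d m = valF a b d n := by
  refine (Finset.sum_subset (Finset.range_subset_range.2 (by omega)) fun x _ hx => ?_).symm
  have : d x = 0 := hsup x (by simpa [Nat.lt_succ_iff] using hx)
  simp [this]

lemma finsum_eq_valF {d : ℕ → ℕ} {n : ℕ} (hsup : ∀ i, n < i → d i = 0) :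
    ∑ᶠ i : ℕ, (d i : ℤ) * Tseq a b i = valF a b d n := by
  refine finsum_eq_sum_of_support_subset _ fun i hi => ?_
  simp only [Finset.coe_range, Set.mem_Iio]
  by_contra h
  have : d i = 0 := hsup i (by omega)
  simp [this] at hi

end AdmRep


open AdmRep

/-- Every nonnegative integer has a unique admissible representation
`N = Σ d_i T_i` with digits in `{0, …, a−1}`. -/
theorem unique_admissible_representation (a b : ℤ) (hab : -a + 1 ≤ b) (hb : b ≤ -2)
    (N : ℕ) :
    ∃! d : ℕ → ℕ, IsAdmissible a b d ∧ (∀ i, (d i : ℤ) ≤ a - 1) ∧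
      (N : ℤ) = ∑ᶠ i : ℕ, (d i : ℤ) * Tseq a b i := by
  have ha : 3 ≤ a := ha3 hab hb
  have hTN : (N : ℤ) < Tseq a b (N+1) := by
    have := Tge hab hb (N+1)
    push_cast at this
    linarith
  obtain ⟨Eex, -, -, -, -, -⟩ := Pall hab hb N
  obtain ⟨d, hsup, hadm, hval⟩ := Eex N (Int.natCast_nonneg N) hTN
  have hadmd : ∀ M : ℕ, AdmUpTo a b d M := by
    intro M j hj
    rcases le_or_gt j N with h | h
    · exact hadm j h
    · exact wordle_of_lt (by simp [hsup j h]; omega) j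
  refine ⟨d, ⟨⟨?_, ?_⟩, ?_, ?_⟩, ?_⟩
  · refine Set.Finite.subset (Set.finite_Iic N) fun i hi => ?_
    simp only [Set.mem_Iic]
    by_contra h
    exact hi (hsup i (by omega))
  · intro j k hkj
    exact wordle_mono hkj (hadmd j j le_rfl)
  · intro i
    exact wordle_digit_le hab hb (hadmd i i le_rfl)
  · rw [finsum_eq_valF hsup, hval]
  · rintro e ⟨⟨hfin, hadw⟩, hdig, hvale⟩
    obtain ⟨M0, hM0⟩ := hfin.bddAbove
    set M := max N M0 with hM
    have hsupe : ∀ i, M < i → e i = 0 := by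
      intro i hi
      by_contra h
      have : i ≤ M0 := hM0 (Function.mem_support.2 h)
      omega
    have hvdM : valF a b d M = (N : ℤ) := by
      rw [valF_extend hsup (le_max_left _ _), hval]
    have hveM : valF a b e M = (N : ℤ) := by
      rw [← finsum_eq_valF hsupe, ← hvale]
    obtain ⟨-, -, Equ, -, -, -⟩ := Pall hab hb M
    have heq : ∀ i ≤ M, e i = d i :=
      Equ e d (fun j _ => hadw j j le_rfl) (fun j hj => hadmd M j hj) (hveM.trans hvdM.symm)
    funext i
    rcases le_or_gt i M with h | h
    · exact heq i h
    · rw [hsupe i h, hsup i (by omega)]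
end

section
/- If (d_i)_{i≥0} is an admissible finitely supported sequence of nonnegative integers, then for every j ≥ 0 one has Σ_{i=0}^{j} d_i T_i < T_{j+1}. -/
open scoped BigOperators

section Aux

variable (a b : ℤ)

private lemma Tseq_rec (n : ℕ) :
    Tseq a b (n + 3) = a * Tseq a b (n + 2) + b * Tseq a b (n + 1) + Tseq a b n := rfl

private lemma Tseq_pos_mono (hab : -a + 1 ≤ b) (hb : b ≤ -2) :
    ∀ n, 1 ≤ Tseq a b n ∧ Tseq a b n ≤ Tseq a b (n + 1) := by
  have ha : 3 ≤ a := by linarith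
  intro n
  induction n using Nat.strong_induction_on with
  | _ n ih =>
    match n with
    | 0 => constructor <;> simp [Tseq] <;> linarith
    | 1 => constructor <;> simp [Tseq] <;> nlinarith
    | 2 =>
      constructor
      · simp only [Tseq]; nlinarith
      · rw [show Tseq a b (2+1) = a * Tseq a b 2 + b * Tseq a b 1 + Tseq a b 0 from rfl]
        simp only [Tseq]; nlinarith
    | (k + 3) =>
      obtain ⟨h1, h2⟩ := ih (k+1) (by omega)
      obtain ⟨h3, h4⟩ := ih (k+2) (by omega)
      obtain ⟨h0, _⟩ := ih k (by omega)
      have e1 := Tseq_rec a b k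
      have e2 := Tseq_rec a b (k+1)
      constructor
      · nlinarith
      · rw [show k+3+1 = (k+1)+3 from rfl] at *
        nlinarith

private lemma sumT (j : ℕ) :
    (a + b) * ∑ i ∈ Finset.range (j + 2), Tseq a b i =
      Tseq a b (j + 2) + (b + 1) * Tseq a b (j + 1) + Tseq a b j - 1 := by
  induction j with
  | zero => simp [Finset.sum_range_succ, Tseq]; ring
  | succ j ih =>
    rw [Finset.sum_range_succ, show j+1+2 = j+3 from rfl, Tseq_rec]
    linear_combination ih

private lemma Lval (j : ℕ) :
    ∑ i ∈ Finset.range (j + 1), ruleWord a b i * Tseq a b (j - i) =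
      Tseq a b (j + 1) - 1 := by
  match j with
  | 0 => simp [ruleWord, Tseq]
  | 1 => simp [Finset.sum_range_succ, ruleWord, Tseq]; ring
  | 2 =>
    simp [Finset.sum_range_succ, ruleWord, Tseq]
    ring
  | (k + 3) =>
    rw [Finset.sum_range_succ' _ (k+3), Finset.sum_range_succ' _ (k+2)]
    have h1 : ∀ i, ruleWord a b (i+1+1) * Tseq a b (k+3 - (i+1+1)) =
        (a+b) * Tseq a b (k + 2 - 1 - i) := by
      intro i
      have : k + 3 - (i+1+1) = k + 2 - 1 - i := by omega
      rw [this]; rfl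
    rw [Finset.sum_congr rfl (fun i _ => h1 i), ← Finset.mul_sum,
      Finset.sum_range_reflect (fun i => Tseq a b i) (k+2)]
    have h2 := sumT a b k
    have e1 := Tseq_rec a b k
    have e2 := Tseq_rec a b (k+1)
    simp only [show k+3-1 = k+2 from rfl, show k+3-0 = k+3 from rfl, ruleWord]
    rw [show k+3+1 = (k+1)+3 from rfl, Tseq_rec]
    rw [show k+1+2 = k+3 from rfl, show k+1+1 = k+2 from rfl] at e2
    linear_combination h2 - e2 - a*e1
end Aux

/-- For an admissible finitely supported digit sequence, `Σ_{i=0}^{j} d_i T_i < T (j+1)`. -/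
theorem admissible_partial_sum_lt (a b : ℤ) (hab : -a + 1 ≤ b) (hb : b ≤ -2)
    (d : ℕ → ℕ) (hd : IsAdmissible a b d) (j : ℕ) :
    ∑ i ∈ Finset.range (j + 1), (d i : ℤ) * Tseq a b i < Tseq a b (j + 1) := by
  have ha : 3 ≤ a := by linarith
  have hT1 : ∀ n, 1 ≤ Tseq a b n := fun n => (Tseq_pos_mono a b hab hb n).1
  have hrw_nonneg : ∀ i, 0 ≤ ruleWord a b i := by
    intro i
    match i with
    | 0 => simp [ruleWord]; linarith
    | 1 => simp [ruleWord]; linarith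
    | (k+2) => simp [ruleWord]; linarith
  -- V bound
  have vBound : ∀ j m : ℕ, m ≤ j →
      ∑ i ∈ Finset.range (m + 1), ruleWord a b i * Tseq a b (j - i) ≤
        Tseq a b (j + 1) - 1 := by
    intro j m hm
    rw [← Lval a b j]
    apply Finset.sum_le_sum_of_subset_of_nonneg
    · exact Finset.range_subset_range.2 (by omega)
    · intro i _ _
      exact mul_nonneg (hrw_nonneg i) (by linarith [hT1 (j - i)])
  induction j using Nat.strong_induction_on with
  | _ j ih =>
    have hrefl : ∑ i ∈ Finset.range (j + 1), (d i : ℤ) * Tseq a b i =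
        ∑ i ∈ Finset.range (j + 1), (d (j - i) : ℤ) * Tseq a b (j - i) := by
      rw [← Finset.sum_range_reflect (fun i => (d i : ℤ) * Tseq a b i) (j+1)]
      exact Finset.sum_congr rfl (fun i hi => by norm_num)
    rw [hrefl]
    rcases hd.2 j j le_rfl with h | ⟨m, hm, hpre, hlt⟩
    · -- all equal case
      have : ∑ i ∈ Finset.range (j + 1), (d (j - i) : ℤ) * Tseq a b (j - i) =
          ∑ i ∈ Finset.range (j + 1), ruleWord a b i * Tseq a b (j - i) := by
        refine Finset.sum_congr rfl (fun i hi => ?_)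
        rw [h i (by simpa using Nat.lt_succ_iff.mp (Finset.mem_range.mp hi))]
      rw [this, Lval a b j]
      linarith [hT1 (j+1)]
    · -- strict case at position m
      have hsplit : j + 1 = (m + 1) + (j - m) := by omega
      rw [hsplit, Finset.sum_range_add]
      -- tail bound
      have htail : ∑ i ∈ Finset.range (j - m),
          (d (j - (m + 1 + i)) : ℤ) * Tseq a b (j - (m + 1 + i)) < Tseq a b (j - m) := by
        have hre : ∑ i ∈ Finset.range (j - m),
            (d (j - (m + 1 + i)) : ℤ) * Tseq a b (j - (m + 1 + i)) =
            ∑ i ∈ Finset.range (j - m), (d i : ℤ) * Tseq a b i := by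
          rw [← Finset.sum_range_reflect (fun i => (d i : ℤ) * Tseq a b i) (j - m)]
          refine Finset.sum_congr rfl (fun i hi => ?_)
          have : j - (m + 1 + i) = j - m - 1 - i := by omega
          rw [this]
        rw [hre]
        rcases Nat.lt_or_ge m j with hmj | hmj
        · have := ih (j - m - 1) (by omega)
          rw [show j - m - 1 + 1 = j - m from by omega] at this
          exact this
        · have : j - m = 0 := by omega
          rw [this]
          simpa using (hT1 0 : 1 ≤ Tseq a b 0).trans_lt' zero_lt_one
      -- prefix
      have hpref : ∑ i ∈ Finset.range (m + 1), (d (j - i) : ℤ) * Tseq a b (j - i) ≤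
          (∑ i ∈ Finset.range (m + 1), ruleWord a b i * Tseq a b (j - i)) -
            Tseq a b (j - m) := by
        rw [Finset.sum_range_succ, Finset.sum_range_succ]
        have h1 : ∑ i ∈ Finset.range m, (d (j - i) : ℤ) * Tseq a b (j - i) =
            ∑ i ∈ Finset.range m, ruleWord a b i * Tseq a b (j - i) :=
          Finset.sum_congr rfl (fun i hi => by rw [hpre i (Finset.mem_range.mp hi)])
        have h2 : (d (j - m) : ℤ) * Tseq a b (j - m) ≤
            (ruleWord a b m - 1) * Tseq a b (j - m) :=
          mul_le_mul_of_nonneg_right (by omega) (by linarith [hT1 (j - m)])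
        rw [h1]
        nlinarith [hT1 (j - m)]
      have hV := vBound j m hm
      rw [show (m + 1) + (j - m) = j + 1 from by omega]
      linarith
end

section
/- The sequence (T_n)_{n≥0} is a strictly increasing sequence of positive integers: for all n ≥ 0, 0 < T_n < T_{n+1}. -/
open scoped BigOperators

/-- `(T n)` is a strictly increasing sequence of positive integers. -/
theorem Tseq_pos_strictMono (a b : ℤ) (hab : -a + 1 ≤ b) (hb : b ≤ -2) (n : ℕ) :
    0 < Tseq a b n ∧ Tseq a b n < Tseq a b (n + 1) := by
  have ha : 3 ≤ a := by linarith
  suffices h : ∀ n : ℕ, (0 < Tseq a b n ∧ Tseq a b n < Tseq a b (n + 1)) ∧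
      (0 < Tseq a b (n + 1) ∧ Tseq a b (n + 1) < Tseq a b (n + 2)) from (h n).1
  intro n
  induction n with
  | zero =>
    simp only [Tseq]
    refine ⟨⟨one_pos, by linarith⟩, ⟨by linarith, ?_⟩⟩
    nlinarith
  | succ k ih =>
    obtain ⟨⟨h1, h2⟩, h3, h4⟩ := ih
    refine ⟨⟨h3, h4⟩, lt_trans h3 h4, ?_⟩
    show Tseq a b (k + 2) < Tseq a b (k + 3)
    have hrec : Tseq a b (k + 3) =
        a * Tseq a b (k + 2) + b * Tseq a b (k + 1) + Tseq a b k := rfl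
    nlinarith [mul_le_mul_of_nonneg_right hab (le_of_lt h3)]
end

section
/- For all n ≥ 2, the matrix B maps the column vector (T_n/β − T_{n−1}, T_n/β² − T_{n−2}) to the column vector (T_{n+1}/β − T_n, T_{n+1}/β² − T_{n−1}). -/
open scoped BigOperators

/-- For `n ≥ 2`, `B` maps `(T n/β − T(n−1), T n/β² − T(n−2))` to
`(T(n+1)/β − T n, T(n+1)/β² − T(n−1))`. -/
theorem Bmat_mulVec_delta (a b : ℤ) (hab : -a + 1 ≤ b) (hb : b ≤ -2)
    (β : ℝ) (hβ : 1 < β) (hβroot : β ^ 3 = a * β ^ 2 + b * β + 1)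
    (n : ℕ) (hn : 2 ≤ n) :
    (Bmat b β).mulVec
      ![(Tseq a b n : ℝ) / β - (Tseq a b (n - 1) : ℝ),
        (Tseq a b n : ℝ) / β ^ 2 - (Tseq a b (n - 2) : ℝ)] =
    ![(Tseq a b (n + 1) : ℝ) / β - (Tseq a b n : ℝ),
      (Tseq a b (n + 1) : ℝ) / β ^ 2 - (Tseq a b (n - 1) : ℝ)] := by
  obtain ⟨m, rfl⟩ : ∃ m, n = m + 2 := ⟨n - 2, by omega⟩
  have hβ0 : β ≠ 0 := by positivity
  have hrec : (Tseq a b (m + 3) : ℝ) =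
      a * Tseq a b (m + 2) + b * Tseq a b (m + 1) + Tseq a b m := by
    push_cast [Tseq]; ring
  funext i
  fin_cases i <;>
    simp only [Bmat, Matrix.mulVec, Matrix.cons_val_zero, Matrix.cons_val_one,
      Matrix.head_cons, Matrix.cons_val', Matrix.empty_val', Matrix.cons_val_fin_one,
      Matrix.of_apply, Fin.isValue, Fin.mk_zero, Fin.mk_one, Matrix.vecHead, Matrix.vecTail, dotProduct, Fin.sum_univ_two,
      show m + 2 - 1 = m + 1 from rfl, show m + 2 - 2 = m from rfl, hrec]
  · field_simp
    linear_combination (Tseq a b (m + 2) : ℝ) * hβroot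
  · field_simp
    linear_combination (Tseq a b (m + 2) : ℝ) * hβroot
end

section
/- If N is a positive integer with admissible T-representation N = Σ_{j=0}^{k} d_j T_j, then δ(N) = Σ_{j=0}^{k} d_j B^j δ(1), where δ(1) = (1/β, 1/β²). -/
open scoped BigOperators

def Useq (a b : ℤ) : ℕ → ℤ
  | 0 => 0
  | 1 => 0
  | n + 2 => Tseq a b n

lemma Useq_rec (a b : ℤ) (n : ℕ) :
    Useq a b (n + 3) = a * Useq a b (n + 2) + b * Useq a b (n + 1) + Useq a b n := by
  match n with
  | 0 => simp [Useq, Tseq]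
  | 1 => simp [Useq, Tseq]; ring
  | n + 2 => rfl

lemma pow_mulVec (a b : ℤ) (β : ℝ) (hβ0 : β ≠ 0)
    (hβroot : β ^ 3 = a * β ^ 2 + b * β + 1) (j : ℕ) :
    (Bmat b β ^ j).mulVec ![1 / β, 1 / β ^ 2] =
      ![(Useq a b (j + 2) : ℝ) / β - (Useq a b (j + 1) : ℝ),
        (Useq a b (j + 2) : ℝ) / β ^ 2 - (Useq a b j : ℝ)] := by
  induction j with
  | zero =>
      funext i
      fin_cases i <;> simp [Useq, Tseq, Matrix.one_mulVec]
  | succ j ih =>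
      have hrec : ((Useq a b (j + 3) : ℤ) : ℝ) =
          a * (Useq a b (j + 2) : ℝ) + b * (Useq a b (j + 1) : ℝ) + (Useq a b j : ℝ) := by
        exact_mod_cast congrArg (fun z : ℤ => (z : ℝ)) (Useq_rec a b j)
      rw [pow_succ', ← Matrix.mulVec_mulVec, ih]
      funext i
      have e1 : j + 1 + 2 = j + 3 := by omega
      have e2 : j + 1 + 1 = j + 2 := by omega
      fin_cases i <;>
        · simp [Bmat, Matrix.mulVec, dotProduct, e1, e2, hrec]
          field_simp
          first
            | linear_combination ((Useq a b (j+2) : ℝ)) * hβroot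
            | linear_combination ((Useq a b (j+2) : ℝ)) * β^5 * hβroot


/-- If `N = Σ_j d_j T_j` is an admissible representation then
`δ(N) = Σ_j d_j B^j δ(1)` with `δ(1) = (1/β, 1/β²)`. -/
theorem deltaVec_eq_sum_pow (a b : ℤ) (hab : -a + 1 ≤ b) (hb : b ≤ -2)
    (β : ℝ) (hβ : 1 < β) (hβroot : β ^ 3 = a * β ^ 2 + b * β + 1)
    (N : ℕ) (hN : 0 < N) (d : ℕ → ℕ) (hd : IsAdmissible a b d)
    (hrep : (N : ℤ) = ∑ᶠ i : ℕ, (d i : ℤ) * Tseq a b i) :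
    deltaVec a b β N d =
      ∑ᶠ j : ℕ, (d j : ℝ) • (Bmat b β ^ j).mulVec ![1 / β, 1 / β ^ 2] := by
  classical
  have hβ0 : β ≠ 0 := ne_of_gt (lt_trans one_pos hβ)
  obtain ⟨m, hm⟩ := hd.1.bddAbove
  set n : ℕ := m + 1 with hn
  have hdz : ∀ j, n ≤ j → d j = 0 := by
    intro j hj
    by_contra h
    have : j ∈ Function.support d := h
    have := hm this
    omega
  -- convert all finsums to finite sums over range n
  have hsub : ∀ (f : ℕ → ℝ), (∀ j, d j = 0 → f j = 0) →
      Function.support f ⊆ ((Finset.range n : Finset ℕ) : Set ℕ) := by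
    intro f hf j hj
    simp only [Finset.coe_range, Set.mem_Iio]
    by_contra h
    exact hj (hf j (hdz j (by omega)))
  have hrepR : (N : ℝ) = ∑ j ∈ Finset.range n, (d j : ℝ) * (Tseq a b j : ℝ) := by
    have h1 : (∑ᶠ i : ℕ, (d i : ℤ) * Tseq a b i) =
        ∑ i ∈ Finset.range n, (d i : ℤ) * Tseq a b i := by
      apply finsum_eq_finset_sum_of_support_subset
      intro j hj
      simp only [Finset.coe_range, Set.mem_Iio]
      by_contra h
      simp only [Function.mem_support, hdz j (by omega)] at hj
      exact hj (by simp)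
    have h2 : (N : ℤ) = ∑ i ∈ Finset.range n, (d i : ℤ) * Tseq a b i := by rw [hrep, h1]
    exact_mod_cast h2
  have hS1 : (∑ᶠ j : ℕ, (d (j + 1) : ℝ) * (Tseq a b j : ℝ)) =
      ∑ j ∈ Finset.range n, (d (j + 1) : ℝ) * (Tseq a b j : ℝ) := by
    apply finsum_eq_finset_sum_of_support_subset
    intro j hj
    simp only [Finset.coe_range, Set.mem_Iio]
    by_contra h
    simp only [Function.mem_support, hdz (j+1) (by omega)] at hj
    exact hj (by simp)
  have hS2 : (∑ᶠ j : ℕ, (d (j + 2) : ℝ) * (Tseq a b j : ℝ)) =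
      ∑ j ∈ Finset.range n, (d (j + 2) : ℝ) * (Tseq a b j : ℝ) := by
    apply finsum_eq_finset_sum_of_support_subset
    intro j hj
    simp only [Finset.coe_range, Set.mem_Iio]
    by_contra h
    simp only [Function.mem_support, hdz (j+2) (by omega)] at hj
    exact hj (by simp)
  have hRHS : (∑ᶠ j : ℕ, (d j : ℝ) • (Bmat b β ^ j).mulVec ![1 / β, 1 / β ^ 2]) =
      ∑ j ∈ Finset.range n, (d j : ℝ) • (Bmat b β ^ j).mulVec ![1 / β, 1 / β ^ 2] := by
    apply finsum_eq_finset_sum_of_support_subset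
    intro j hj
    simp only [Finset.coe_range, Set.mem_Iio]
    by_contra h
    simp only [Function.mem_support, hdz j (by omega)] at hj
    exact hj (by simp)
  rw [hRHS]
  -- index-shift identities
  have shift1 : (∑ j ∈ Finset.range n, (d j : ℝ) * (Useq a b (j + 1) : ℝ)) =
      ∑ j ∈ Finset.range n, (d (j + 1) : ℝ) * (Tseq a b j : ℝ) := by
    have h1 : (∑ j ∈ Finset.range (n + 1), (d j : ℝ) * (Useq a b (j + 1) : ℝ)) =
        ∑ j ∈ Finset.range n, (d j : ℝ) * (Useq a b (j + 1) : ℝ) := by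
      rw [Finset.sum_range_succ, hdz n le_rfl]; simp
    rw [← h1, Finset.sum_range_succ' (fun j => (d j : ℝ) * (Useq a b (j + 1) : ℝ)) n]
    simp only [Useq]
    norm_num
  have shift2 : (∑ j ∈ Finset.range n, (d j : ℝ) * (Useq a b j : ℝ)) =
      ∑ j ∈ Finset.range n, (d (j + 2) : ℝ) * (Tseq a b j : ℝ) := by
    have h1 : (∑ j ∈ Finset.range (n + 2), (d j : ℝ) * (Useq a b j : ℝ)) =
        ∑ j ∈ Finset.range n, (d j : ℝ) * (Useq a b j : ℝ) := by
      rw [Finset.sum_range_succ, Finset.sum_range_succ, hdz n le_rfl, hdz (n+1) (by omega)]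
      simp
    rw [← h1, Finset.sum_range_succ' (fun j => (d j : ℝ) * (Useq a b j : ℝ)) (n + 1),
      Finset.sum_range_succ' (fun j => (d (j + 1) : ℝ) * (Useq a b (j + 1) : ℝ)) n]
    simp only [Useq]
    norm_num
  funext i
  rw [Finset.sum_apply]
  fin_cases i <;>
    simp only [deltaVec, Matrix.cons_val_zero, Matrix.cons_val_one, Matrix.head_cons,
      hS1, hS2, Pi.smul_apply, smul_eq_mul]
  · calc (N : ℝ) / β - ∑ j ∈ Finset.range n, (d (j + 1) : ℝ) * (Tseq a b j : ℝ)
        = ∑ j ∈ Finset.range n,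
            (d j : ℝ) * ((Useq a b (j + 2) : ℝ) / β - (Useq a b (j + 1) : ℝ)) := by
          rw [← shift1, hrepR, Finset.sum_div, ← Finset.sum_sub_distrib]
          apply Finset.sum_congr rfl
          intro j _
          have : ((Tseq a b j : ℤ) : ℝ) = ((Useq a b (j + 2) : ℤ) : ℝ) := rfl
          rw [this]; ring
      _ = _ := by
          apply Finset.sum_congr rfl
          intro j _
          rw [pow_mulVec a b β hβ0 hβroot j]
          simp
  · calc (N : ℝ) / β ^ 2 - ∑ j ∈ Finset.range n, (d (j + 2) : ℝ) * (Tseq a b j : ℝ)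
        = ∑ j ∈ Finset.range n,
            (d j : ℝ) * ((Useq a b (j + 2) : ℝ) / β ^ 2 - (Useq a b j : ℝ)) := by
          rw [← shift2, hrepR, Finset.sum_div, ← Finset.sum_sub_distrib]
          apply Finset.sum_congr rfl
          intro j _
          have : ((Tseq a b j : ℤ) : ℝ) = ((Useq a b (j + 2) : ℤ) : ℝ) := rfl
          rw [this]; ring
      _ = _ := by
          apply Finset.sum_congr rfl
          intro j _
          rw [pow_mulVec a b β hβ0 hβroot j]
          simp
end

section
/- With M the complex 2×2 matrix with first row (ᾱ + b/β, 1/β) and second row (−α − b/β, −1/β), one has M·B = D·M, where D is the diagonal complex 2×2 matrix with diagonal entries α and ᾱ, and B is viewed as a complex matrix. -/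
open scoped BigOperators

/-- `M·B = D·M` where `M = [[ᾱ + b/β, 1/β], [−α − b/β, −1/β]]` and `D = diag(α, ᾱ)`. -/
theorem Mmat_mul_Bmat (a b : ℤ) (hab : -a + 1 ≤ b) (hb : b ≤ -2)
    (β : ℝ) (hβ : 1 < β) (hβroot : β ^ 3 = a * β ^ 2 + b * β + 1)
    (α : ℂ) (hαim : α.im ≠ 0) (hαroot : α ^ 3 = a * α ^ 2 + b * α + 1)
    (hαabs : ‖α‖ < 1) :
    let M : Matrix (Fin 2) (Fin 2) ℂ :=
      !![starRingEnd ℂ α + (b : ℂ) / (β : ℂ), 1 / (β : ℂ);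
         -α - (b : ℂ) / (β : ℂ), -1 / (β : ℂ)]
    let Bc : Matrix (Fin 2) (Fin 2) ℂ :=
      !![-(b : ℂ) / (β : ℂ), -1 / (β : ℂ);
         1 - (b : ℂ) / (β : ℂ) ^ 2, -1 / (β : ℂ) ^ 2]
    let D : Matrix (Fin 2) (Fin 2) ℂ := !![α, 0; 0, starRingEnd ℂ α]
    M * Bc = D * M := by
  intro M Bc D
  have hB0 : (β : ℂ) ≠ 0 := by
    simp only [ne_eq, Complex.ofReal_eq_zero]
    linarith
  have hβC : (β : ℂ) ^ 3 = a * (β : ℂ) ^ 2 + b * (β : ℂ) + 1 := by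
    have := congrArg (fun x : ℝ => (x : ℂ)) hβroot
    push_cast at this
    linear_combination this
  have hcroot : (starRingEnd ℂ) α ^ 3
      = a * (starRingEnd ℂ) α ^ 2 + b * (starRingEnd ℂ) α + 1 := by
    have := congrArg (starRingEnd ℂ) hαroot
    simpa [map_add, map_mul, map_pow] using this
  have hαc : α - (starRingEnd ℂ) α ≠ 0 := by
    rw [sub_ne_zero]
    intro h
    exact hαim (Complex.conj_eq_iff_im.mp h.symm)
  have hβα : (β : ℂ) - α ≠ 0 := by
    rw [sub_ne_zero]
    intro h
    exact hαim (by simpa using (congrArg Complex.im h).symm)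
  have hβc : (β : ℂ) - (starRingEnd ℂ) α ≠ 0 := by
    rw [sub_ne_zero]
    intro h
    apply hαim
    have := congrArg Complex.im h
    simp at this
    simpa using this
  have e1 : (β : ℂ) ^ 2 + β * α + α ^ 2 - a * (β + α) - b = 0 := by
    have h1 : ((β : ℂ) - α) * ((β : ℂ) ^ 2 + β * α + α ^ 2 - a * (β + α) - b) = 0 := by
      linear_combination hβC - hαroot
    exact (mul_eq_zero.mp h1).resolve_left hβα
  have e2 : (β : ℂ) ^ 2 + β * (starRingEnd ℂ) α + (starRingEnd ℂ) α ^ 2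
      - a * (β + (starRingEnd ℂ) α) - b = 0 := by
    have h1 : ((β : ℂ) - (starRingEnd ℂ) α) * ((β : ℂ) ^ 2 + β * (starRingEnd ℂ) α
        + (starRingEnd ℂ) α ^ 2 - a * (β + (starRingEnd ℂ) α) - b) = 0 := by
      linear_combination hβC - hcroot
    exact (mul_eq_zero.mp h1).resolve_left hβc
  have hs : α + (starRingEnd ℂ) α = (a : ℂ) - β := by
    have h3 : (α - (starRingEnd ℂ) α) * ((β : ℂ) + α + (starRingEnd ℂ) α - a) = 0 := by
      linear_combination e1 - e2
    linear_combination (mul_eq_zero.mp h3).resolve_left hαc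
  have e4 : α ^ 2 + α * (starRingEnd ℂ) α + (starRingEnd ℂ) α ^ 2
      - a * (α + (starRingEnd ℂ) α) - b = 0 := by
    have h4 : (α - (starRingEnd ℂ) α) * (α ^ 2 + α * (starRingEnd ℂ) α
        + (starRingEnd ℂ) α ^ 2 - a * (α + (starRingEnd ℂ) α) - b) = 0 := by
      linear_combination hαroot - hcroot
    exact (mul_eq_zero.mp h4).resolve_left hαc
  have hprod : α * (starRingEnd ℂ) α * β = 1 := by
    linear_combination ((β : ℂ) * (α + (starRingEnd ℂ) α - β)) * hs - (β : ℂ) * e4 + hβC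
  ext i j
  fin_cases i <;> fin_cases j <;>
    simp [M, Bc, D, Matrix.mul_apply, Fin.sum_univ_succ] <;> field_simp
  · linear_combination (-((β : ℂ) ^ 2)) * hprod - (b : ℂ) * (β : ℂ) ^ 2 * hs
      + (b : ℂ) * hβC
  · linear_combination (-((β : ℂ) ^ 2)) * hs + hβC
  · linear_combination (β : ℂ) ^ 2 * hprod + (b : ℂ) * (β : ℂ) ^ 2 * hs
      - (b : ℂ) * hβC
  · linear_combination (β : ℂ) ^ 2 * hs - hβC
end

section
/- For every finitely supported sequence (d_n)_{n≥0} of nonnegative integers, 𝒩(Σ_{n=0}^{∞} d_n B^n δ(1)) = 𝒩(δ(1)) · |Σ_{n=0}^{∞} d_n α^n|, where δ(1) = (1/β, 1/β²). -/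
open scoped BigOperators

/-- For every finitely supported digit sequence,
`𝒩(Σ_n d_n B^n δ(1)) = 𝒩(δ(1)) |Σ_n d_n α^n|`. -/
theorem rnorm_sum_pow (a b : ℤ) (hab : -a + 1 ≤ b) (hb : b ≤ -2)
    (β : ℝ) (hβ : 1 < β) (hβroot : β ^ 3 = a * β ^ 2 + b * β + 1)
    (α : ℂ) (hαim : α.im ≠ 0) (hαroot : α ^ 3 = a * α ^ 2 + b * α + 1)
    (hαabs : ‖α‖ < 1)
    (d : ℕ → ℕ) (hd : (Function.support d).Finite) :
    rnorm b β α (∑ᶠ n : ℕ, (d n : ℝ) • (Bmat b β ^ n).mulVec ![1 / β, 1 / β ^ 2]) =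
      rnorm b β α ![1 / β, 1 / β ^ 2] * ‖∑ᶠ n : ℕ, (d n : ℂ) * α ^ n‖ := by
  have hβ0 : β ≠ 0 := by positivity
  have hβc0 : ((β : ℂ)) ≠ 0 := by exact_mod_cast hβ0
  have hβc : ((β : ℂ)) ^ 3 = (a : ℂ) * (β : ℂ) ^ 2 + (b : ℂ) * (β : ℂ) + 1 := by
    have := congrArg (fun x : ℝ => (x : ℂ)) hβroot
    push_cast at this
    exact this
  have hαβ : α ≠ (β : ℂ) := by
    intro h
    apply hαim
    rw [h, Complex.ofReal_im]
  have key : (α - (β : ℂ)) * ((β : ℂ) * α ^ 2 - ((a : ℂ) - (β : ℂ)) * α * (β : ℂ) + 1) = 0 := by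
    linear_combination (β : ℂ) * hαroot - α * hβc
  have hquadp : (β : ℂ) * α ^ 2 - ((a : ℂ) - (β : ℂ)) * α * (β : ℂ) + 1 = 0 := by
    rcases mul_eq_zero.1 key with h | h
    · exact absurd (sub_eq_zero.1 h) hαβ
    · exact h
  have hcquadp : (β : ℂ) * (starRingEnd ℂ α) ^ 2
      - ((a : ℂ) - (β : ℂ)) * (starRingEnd ℂ α) * (β : ℂ) + 1 = 0 := by
    have := congrArg (starRingEnd ℂ) hquadp
    simpa [map_sub, map_add, map_mul, map_pow, map_one, Complex.conj_ofReal] using this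
  have hcα : starRingEnd ℂ α ≠ α := by
    intro h
    apply hαim
    have him := congrArg Complex.im h
    simp only [Complex.conj_im] at him
    linarith
  have hconjp : (β : ℂ) ^ 2 * starRingEnd ℂ α
      = -((β : ℂ) ^ 2 * α + (b : ℂ) * (β : ℂ) + 1) := by
    have hfac : (starRingEnd ℂ α - α) *
        ((β : ℂ) ^ 2 * starRingEnd ℂ α + (β : ℂ) ^ 2 * α + (b : ℂ) * (β : ℂ) + 1) = 0 := by
      linear_combination (β : ℂ) * hcquadp - (β : ℂ) * hquadp
        - (starRingEnd ℂ α - α) * hβc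
    rcases mul_eq_zero.1 hfac with h | h
    · exact absurd (sub_eq_zero.1 h) hcα
    · linear_combination h
  set cα : ℂ := starRingEnd ℂ α with hcαdef
  set L : (Fin 2 → ℝ) → ℂ :=
    fun x => (α + (b : ℂ) / (β : ℂ)) * (x 0 : ℂ) + (x 1 : ℂ) / (β : ℂ) with hLdef
  have hstep : ∀ x : Fin 2 → ℝ, L ((Bmat b β).mulVec x) = cα * L x := by
    intro x
    have h0 : (Bmat b β).mulVec x 0 = (-b / β) * x 0 + (-1 / β) * x 1 := by
      simp [Bmat, Matrix.mulVec, dotProduct, Fin.sum_univ_two]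
    have h1 : (Bmat b β).mulVec x 1 = (1 - b / β ^ 2) * x 0 + (-1 / β ^ 2) * x 1 := by
      simp [Bmat, Matrix.mulVec, dotProduct, Fin.sum_univ_two]
    simp only [hLdef, h0, h1]
    push_cast
    field_simp
    linear_combination
      (-((α * (β : ℂ) + (b : ℂ)) * ((x 0 : ℝ) : ℂ) + ((x 1 : ℝ) : ℂ))) * hconjp
      + (β : ℂ) ^ 2 * ((x 0 : ℝ) : ℂ) * hquadp
      - α * (β : ℂ) * ((x 0 : ℝ) : ℂ) * hβc
  have hpow : ∀ (n : ℕ) (x : Fin 2 → ℝ), L ((Bmat b β ^ n).mulVec x) = cα ^ n * L x := by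
    intro n
    induction n with
    | zero => intro x; simp
    | succ n ih =>
      intro x
      rw [pow_succ', ← Matrix.mulVec_mulVec, hstep, ih, pow_succ']
      ring
  set s : Finset ℕ := hd.toFinset with hsdef
  have hsub1 : (Function.support fun n : ℕ =>
      (d n : ℝ) • (Bmat b β ^ n).mulVec ![1 / β, 1 / β ^ 2]) ⊆ ↑s := by
    intro n hn
    simp only [Function.mem_support, Ne] at hn
    simp only [hsdef, Set.Finite.coe_toFinset, Function.mem_support]
    intro h
    apply hn
    simp [h]
  have hsub2 : (Function.support fun n : ℕ => (d n : ℂ) * α ^ n) ⊆ ↑s := by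
    intro n hn
    simp only [Function.mem_support, Ne] at hn
    simp only [hsdef, Set.Finite.coe_toFinset, Function.mem_support]
    intro h
    apply hn
    simp [h]
  rw [finsum_eq_sum_of_support_subset _ hsub1, finsum_eq_sum_of_support_subset _ hsub2]
  have hrn : ∀ x : Fin 2 → ℝ, rnorm b β α x = ‖L x‖ := fun x => rfl
  have hLsum : L (∑ n ∈ s, (d n : ℝ) • (Bmat b β ^ n).mulVec ![1 / β, 1 / β ^ 2])
      = ∑ n ∈ s, L ((d n : ℝ) • (Bmat b β ^ n).mulVec ![1 / β, 1 / β ^ 2]) := by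
    simp only [hLdef, Finset.sum_apply]
    push_cast
    rw [Finset.mul_sum, Finset.sum_div, ← Finset.sum_add_distrib]
  have hLsmul : ∀ (c : ℝ) (v : Fin 2 → ℝ), L (c • v) = (c : ℂ) * L v := by
    intro c v
    simp only [hLdef, Pi.smul_apply, smul_eq_mul]
    push_cast
    ring
  have hterm : ∀ n ∈ s, L ((d n : ℝ) • (Bmat b β ^ n).mulVec ![1 / β, 1 / β ^ 2])
      = (d n : ℂ) * cα ^ n * L ![1 / β, 1 / β ^ 2] := by
    intro n _
    rw [hLsmul, hpow]
    push_cast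
    ring
  have hmain : L (∑ n ∈ s, (d n : ℝ) • (Bmat b β ^ n).mulVec ![1 / β, 1 / β ^ 2])
      = (∑ n ∈ s, (d n : ℂ) * cα ^ n) * L ![1 / β, 1 / β ^ 2] := by
    rw [hLsum, Finset.sum_congr rfl hterm, Finset.sum_mul]
  have hconjsum : ∑ n ∈ s, (d n : ℂ) * cα ^ n
      = starRingEnd ℂ (∑ n ∈ s, (d n : ℂ) * α ^ n) := by
    rw [map_sum]
    refine Finset.sum_congr rfl fun n _ => ?_
    rw [map_mul, map_pow, map_natCast, hcαdef]
  rw [hrn, hrn, hmain, hconjsum, norm_mul, Complex.norm_conj, mul_comm]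
end

section
/- For all n ≥ 0, 𝒩(δ(T_n)) = 𝒩(δ(1)) · |α|^n, where δ(T_n) = T_n·(1/β, 1/β²) − (T_{n−1}, T_{n−2}) for n ≥ 2 (with δ(T_0) = (1/β, 1/β²) and δ(T_1) = T_1·(1/β, 1/β²) − (1, 0)). -/
open scoped BigOperators

/-- `δ(T n)`: `δ(T 0) = (1/β, 1/β²)`, `δ(T 1) = T 1·(1/β, 1/β²) − (1, 0)`, and for `n ≥ 2`,
`δ(T n) = T n·(1/β, 1/β²) − (T (n−1), T (n−2))`. -/
noncomputable def deltaT (a b : ℤ) (β : ℝ) : ℕ → (Fin 2 → ℝ)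
  | 0 => ![1 / β, 1 / β ^ 2]
  | 1 => ![(Tseq a b 1 : ℝ) / β - 1, (Tseq a b 1 : ℝ) / β ^ 2]
  | n + 2 => ![(Tseq a b (n + 2) : ℝ) / β - (Tseq a b (n + 1) : ℝ),
               (Tseq a b (n + 2) : ℝ) / β ^ 2 - (Tseq a b n : ℝ)]

/-- The value of the Rauzy linear functional at `deltaT n`, as a complex number. -/
noncomputable def fC (a b : ℤ) (β : ℝ) (α : ℂ) : ℕ → ℂ
  | 0 => (α + (b : ℂ) / (β : ℂ)) * (1 / (β : ℂ)) + (1 / (β : ℂ) ^ 2) / (β : ℂ)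
  | 1 => (α + (b : ℂ) / (β : ℂ)) * ((Tseq a b 1 : ℂ) / (β : ℂ) - 1) +
      ((Tseq a b 1 : ℂ) / (β : ℂ) ^ 2) / (β : ℂ)
  | n + 2 => (α + (b : ℂ) / (β : ℂ)) * ((Tseq a b (n + 2) : ℂ) / (β : ℂ) - (Tseq a b (n + 1) : ℂ)) +
      ((Tseq a b (n + 2) : ℂ) / (β : ℂ) ^ 2 - (Tseq a b n : ℂ)) / (β : ℂ)

/-- For all `n ≥ 0`, `𝒩(δ(T n)) = 𝒩(δ(1)) |α|^n`. -/
theorem rnorm_deltaT (a b : ℤ) (hab : -a + 1 ≤ b) (hb : b ≤ -2)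
    (β : ℝ) (hβ : 1 < β) (hβroot : β ^ 3 = a * β ^ 2 + b * β + 1)
    (α : ℂ) (hαim : α.im ≠ 0) (hαroot : α ^ 3 = a * α ^ 2 + b * α + 1)
    (hαabs : ‖α‖ < 1) (n : ℕ) :
    rnorm b β α (deltaT a b β n) =
      rnorm b β α ![1 / β, 1 / β ^ 2] * ‖α‖ ^ n := by
  have hβ0 : β ≠ 0 := by positivity
  set B : ℂ := (β : ℂ) with hBdef
  have hB0 : B ≠ 0 := by
    simp only [hBdef, ne_eq, Complex.ofReal_eq_zero]; exact hβ0
  set G : ℂ := (starRingEnd ℂ) α with hGdef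
  have hβC : B ^ 3 = (a : ℂ) * B ^ 2 + (b : ℂ) * B + 1 := by
    rw [hBdef]
    exact_mod_cast congrArg Complex.ofReal hβroot
  have hGroot : G ^ 3 = (a : ℂ) * G ^ 2 + (b : ℂ) * G + 1 := by
    have h := congrArg (starRingEnd ℂ) hαroot
    simpa [hGdef, map_add, map_mul, map_pow] using h
  have hαβ : B ≠ α := by
    intro h
    apply hαim
    rw [← h, hBdef]
    simp
  have hβG : B ≠ G := by
    intro h
    apply hαim
    have := congrArg Complex.im h
    simp only [hBdef, hGdef, Complex.ofReal_im, Complex.conj_im] at this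
    linarith
  have hαG : α ≠ G := by
    intro h
    apply hαim
    have := congrArg Complex.im h
    simp only [hGdef, Complex.conj_im] at this
    linarith
  -- Vieta's formulas for the three roots β, α, conj α
  have q1 : B ^ 2 + B * α + α ^ 2 - (a : ℂ) * (B + α) - (b : ℂ) = 0 := by
    have hfac : (B - α) * (B ^ 2 + B * α + α ^ 2 - (a : ℂ) * (B + α) - (b : ℂ)) = 0 := by
      linear_combination hβC - hαroot
    rcases mul_eq_zero.mp hfac with h | h
    · exact absurd (sub_eq_zero.mp h) hαβ
    · exact h
  have q2 : B ^ 2 + B * G + G ^ 2 - (a : ℂ) * (B + G) - (b : ℂ) = 0 := by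
    have hfac : (B - G) * (B ^ 2 + B * G + G ^ 2 - (a : ℂ) * (B + G) - (b : ℂ)) = 0 := by
      linear_combination hβC - hGroot
    rcases mul_eq_zero.mp hfac with h | h
    · exact absurd (sub_eq_zero.mp h) hβG
    · exact h
  have hs : α + G + B = (a : ℂ) := by
    have hfac : (α - G) * (α + G + B - (a : ℂ)) = 0 := by
      linear_combination q1 - q2
    rcases mul_eq_zero.mp hfac with h | h
    · exact absurd (sub_eq_zero.mp h) hαG
    · linear_combination h
  have hp : B * α + B * G + α * G = -(b : ℂ) := by
    linear_combination (B + α) * hs - q1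
  have hq : B * (α * G) = 1 := by
    linear_combination hβC - B ^ 2 * hs + B * hp
  have h1 : ∀ x : ℂ, x / B = x * (α * G) := by
    intro x
    rw [div_eq_iff hB0]
    linear_combination (-x) * hq
  have h2 : ∀ x : ℂ, x / B ^ 2 = x * (α * G) ^ 2 := by
    intro x
    rw [div_eq_iff (pow_ne_zero 2 hB0)]
    linear_combination (-(x * B * (α * G) + x)) * hq
  -- the key recurrence step
  have key : ∀ m : ℕ, fC a b β α (m + 1) = G * fC a b β α m := by
    intro m
    match m with
    | 0 =>
      have hT1 : ((Tseq a b 1 : ℤ) : ℂ) = (a : ℂ) := by norm_num [Tseq]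
      simp only [fC, hT1, ← hBdef]
      simp only [h1, h2]
      linear_combination ((-1)*α^2*G + (-1)*α^2*G^2*(b:ℂ) + (-1)*α^3*G^3) * hs + ((-1)*α*G + α^2*G^2*B + α^3*G^2) * hp + (α + (-1)*α*G^2*B + (-1)*α^2*G*B + (-1)*α^2*G^2 + (-1)*α^3*G) * hq
    | 1 =>
      have hT1 : ((Tseq a b 1 : ℤ) : ℂ) = (a : ℂ) := by norm_num [Tseq]
      have hT2 : ((Tseq a b 2 : ℤ) : ℂ) = (a : ℂ) ^ 2 + (b : ℂ) := by norm_num [Tseq]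
      have hT0 : ((Tseq a b 0 : ℤ) : ℂ) = 1 := by norm_num [Tseq]
      simp only [fC, hT0, hT1, hT2, ← hBdef]
      simp only [h1, h2]
      linear_combination (α + α*G*(b:ℂ) + (-1)*α^2*G*(a:ℂ) + (-1)*α^2*G*B + (-1)*α^2*G^2*(a:ℂ)*(b:ℂ) + (-1)*α^2*G^2*B*(b:ℂ) + (-1)*α^3*G + (-1)*α^3*G^2*(b:ℂ) + (-1)*α^3*G^3*(a:ℂ) + (-1)*α^3*G^3*B + (-1)*α^4*G^3) * hs + ((-1)*α*G*B + α^2*G^2*(b:ℂ) + α^2*G^2*B^2 + α^3*G^2*B + α^3*G^3 + α^4*G^2) * hp + (α*B + α*G + (-1)*α*G^2*B^2 + α^2 + (-1)*α^2*G*B^2 + (-1)*α^2*G^2*B + (-1)*α^3*G*B + (-1)*α^3*G^2 + (-1)*α^4*G) * hq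
    | (k + 2) =>
      have hT3 : ((Tseq a b (k + 3) : ℤ) : ℂ) =
          (a : ℂ) * (Tseq a b (k + 2) : ℂ) + (b : ℂ) * (Tseq a b (k + 1) : ℂ)
            + (Tseq a b k : ℂ) := by
        rw [show Tseq a b (k + 3) = a * Tseq a b (k + 2) + b * Tseq a b (k + 1) + Tseq a b k
          from rfl]
        push_cast
        ring
      set t0 : ℂ := ((Tseq a b k : ℤ) : ℂ) with ht0
      set t1 : ℂ := ((Tseq a b (k + 1) : ℤ) : ℂ) with ht1
      set t2 : ℂ := ((Tseq a b (k + 2) : ℤ) : ℂ) with ht2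
      show (α + (b : ℂ) / B) * ((Tseq a b (k + 3) : ℂ) / B - t2) +
          ((Tseq a b (k + 3) : ℂ) / B ^ 2 - t1) / B =
        G * ((α + (b : ℂ) / B) * (t2 / B - t1) + (t2 / B ^ 2 - t0) / B)
      rw [hT3]
      simp only [h1, h2]
      linear_combination ((-1)*α^2*G*t2 + (-1)*α^2*G^2*(b:ℂ)*t2 + (-1)*α^3*G^3*t2) * hs + ((-1)*α*G*t2 + α*G^2*t1 + α^2*G*t1 + α^2*G^2*t0 + α^2*G^2*(b:ℂ)*t1 + α^2*G^2*B*t2 + (-1)*α^2*G^3*B*t1 + α^3*G^2*t2 + (-1)*α^3*G^2*B*t1) * hp + (α*t2 + (-1)*α*G^2*t0 + (-1)*α*G^2*B*t2 + α*G^3*B*t1 + (-1)*α^2*G*t0 + (-1)*α^2*G*B*t2 + (-1)*α^2*G^2*t2 + (2)*α^2*G^2*B*t1 + α^2*G^3*t1 + (-1)*α^3*G*t2 + α^3*G*B*t1 + α^3*G^2*t1) * hq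
  have hfn : ∀ m : ℕ, fC a b β α m = fC a b β α 0 * G ^ m := by
    intro m
    induction m with
    | zero => simp
    | succ k ih => rw [key k, ih]; ring
  have habs : ∀ m : ℕ, rnorm b β α (deltaT a b β m) = ‖fC a b β α m‖ := by
    intro m
    match m with
    | 0 =>
      simp only [rnorm, deltaT, fC]
      congr 1
      simp only [Matrix.cons_val_zero, Matrix.cons_val_one, Matrix.head_cons]
      push_cast
      ring
    | 1 =>
      simp only [rnorm, deltaT, fC]
      congr 1
      simp only [Matrix.cons_val_zero, Matrix.cons_val_one, Matrix.head_cons]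
      push_cast
      ring
    | (k + 2) =>
      simp only [rnorm, deltaT, fC]
      congr 1
      simp only [Matrix.cons_val_zero, Matrix.cons_val_one, Matrix.head_cons]
      push_cast
      ring
  have hR : rnorm b β α ![1 / β, 1 / β ^ 2] = ‖fC a b β α 0‖ := by
    have : (![1 / β, 1 / β ^ 2] : Fin 2 → ℝ) = deltaT a b β 0 := rfl
    rw [this, habs 0]
  rw [habs n, hR, hfn n, norm_mul, norm_pow]
  have hGa : ‖G‖ = ‖α‖ := by rw [hGdef]; exact Complex.norm_conj α
  rw [hGa]
end

section
/- Let n ≥ 1 and let d_0, …, d_{n−1} be nonnegative integers, not all zero, such that Σ_{i=0}^{n−1} d_i β^i ≤ β^n. Then |Σ_{i=0}^{n−1} d_i α^i| ≥ |α|^n. -/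
open scoped BigOperators

/-- If `d_0, …, d_{n−1}` are nonnegative integers, not all zero, with
`Σ d_i β^i ≤ β^n`, then `|Σ d_i α^i| ≥ |α|^n`. -/
theorem abs_sum_alpha_ge (a b : ℤ) (hab : -a + 1 ≤ b) (hb : b ≤ -2)
    (β : ℝ) (hβ : 1 < β) (hβroot : β ^ 3 = a * β ^ 2 + b * β + 1)
    (α : ℂ) (hαim : α.im ≠ 0) (hαroot : α ^ 3 = a * α ^ 2 + b * α + 1)
    (hαabs : ‖α‖ < 1)
    (n : ℕ) (hn : 1 ≤ n) (d : ℕ → ℕ) (hne : ∃ i < n, d i ≠ 0)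
    (hsum : ∑ i ∈ Finset.range n, (d i : ℝ) * β ^ i ≤ β ^ n) :
    ‖α‖ ^ n ≤ ‖∑ i ∈ Finset.range n, (d i : ℂ) * α ^ i‖ := by
  classical
  have hβpos : (0:ℝ) < β := lt_trans one_pos hβ
  set w : ℂ := (starRingEnd ℂ) α with hw_def
  have hu : ((β:ℂ))^3 = (a:ℂ)*(β:ℂ)^2 + (b:ℂ)*(β:ℂ) + 1 := by exact_mod_cast hβroot
  have hw : w^3 = (a:ℂ)*w^2 + (b:ℂ)*w + 1 := by
    have := congrArg (starRingEnd ℂ) hαroot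
    simpa [map_add, map_mul, map_pow] using this
  have huim : ((β:ℂ)).im = 0 := Complex.ofReal_im β
  have hwim : w.im = -α.im := Complex.conj_im α
  have huv : (β:ℂ) ≠ α := by
    intro h; apply hαim; have := congrArg Complex.im h; rw [huim] at this; linarith
  have huw : (β:ℂ) ≠ w := by
    intro h; apply hαim; have := congrArg Complex.im h; rw [huim, hwim] at this; linarith
  have hvw : α ≠ w := by
    intro h; apply hαim; have := congrArg Complex.im h; rw [hwim] at this; linarith
  -- Vieta
  have Euv : (β:ℂ)^2 + (β:ℂ)*α + α^2 - a*((β:ℂ)+α) - b = 0 := by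
    have h1 : ((β:ℂ) - α) * ((β:ℂ)^2 + (β:ℂ)*α + α^2 - a*((β:ℂ)+α) - b) = 0 := by
      linear_combination hu - hαroot
    exact (mul_eq_zero.mp h1).resolve_left (sub_ne_zero.mpr huv)
  have Euw : (β:ℂ)^2 + (β:ℂ)*w + w^2 - a*((β:ℂ)+w) - b = 0 := by
    have h1 : ((β:ℂ) - w) * ((β:ℂ)^2 + (β:ℂ)*w + w^2 - a*((β:ℂ)+w) - b) = 0 := by
      linear_combination hu - hw
    exact (mul_eq_zero.mp h1).resolve_left (sub_ne_zero.mpr huw)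
  have hs1 : (β:ℂ) + α + w = a := by
    have h2 : (α - w) * ((β:ℂ) + α + w - a) = 0 := by linear_combination Euv - Euw
    exact sub_eq_zero.mp ((mul_eq_zero.mp h2).resolve_left (sub_ne_zero.mpr hvw))
  have hs2 : (β:ℂ)*α + (β:ℂ)*w + α*w = -b := by
    linear_combination -Euv + ((β:ℂ)+α)*hs1
  have hs3 : (β:ℂ)*α*w = 1 := by
    linear_combination hu - (β:ℂ)^2*hs1 + (β:ℂ)*hs2
  -- polynomial reduction mod P
  set Pp : Polynomial ℤ := Polynomial.X^3 - Polynomial.C a * Polynomial.X^2 - Polynomial.C b * Polynomial.X - 1 with hPp_def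
  have hPmonic : Pp.Monic := by rw [hPp_def]; monicity!
  have hPdeg : Pp.natDegree = 3 := by rw [hPp_def]; compute_degree!
  set S : Polynomial ℤ := ∑ i ∈ Finset.range n, Polynomial.C ((d i : ℤ)) * Polynomial.X^i with hS_def
  set c0 : ℤ := (S %ₘ Pp).coeff 0 with hc0_def
  set c1 : ℤ := (S %ₘ Pp).coeff 1 with hc1_def
  set c2 : ℤ := (S %ₘ Pp).coeff 2 with hc2_def
  have hq3 : (S %ₘ Pp).natDegree < 3 := by
    by_cases h0 : S %ₘ Pp = 0
    · rw [h0]; simp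
    · rw [Polynomial.natDegree_lt_iff_degree_lt h0]
      calc (S %ₘ Pp).degree < Pp.degree := Polynomial.degree_modByMonic_lt S hPmonic
        _ = ((3:ℕ):WithBot ℕ) := by
            rw [Polynomial.degree_eq_natDegree hPmonic.ne_zero, hPdeg]
  have hmod : ∀ r : ℂ, r^3 = (a:ℂ)*r^2 + (b:ℂ)*r + 1 →
      ∑ i ∈ Finset.range n, (d i : ℂ) * r^i = (c0:ℂ) + (c1:ℂ)*r + (c2:ℂ)*r^2 := by
    intro r hr
    have hPr : Polynomial.aeval r Pp = 0 := by
      rw [hPp_def]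
      simp only [map_sub, map_mul, map_pow, map_one, Polynomial.aeval_X, Polynomial.aeval_C]
      simp only [algebraMap_int_eq, eq_intCast]
      linear_combination hr
    have hSr : Polynomial.aeval r S = ∑ i ∈ Finset.range n, (d i : ℂ) * r^i := by
      rw [hS_def, map_sum]
      refine Finset.sum_congr rfl fun i _ => ?_
      simp only [map_mul, map_pow, Polynomial.aeval_X, Polynomial.aeval_C, algebraMap_int_eq,
        eq_intCast, Int.cast_natCast, map_natCast, map_intCast]
    have heq := congrArg (Polynomial.aeval r) (Polynomial.modByMonic_add_div S Pp)
    rw [map_add, map_mul, hPr, zero_mul, add_zero, hSr] at heq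
    rw [← heq, Polynomial.aeval_eq_sum_range' hq3]
    simp [Finset.sum_range_succ, zsmul_eq_mul]
    try ring
  -- the integer norm N
  set N : ℤ := c0^3 + a*c0^2*c1 + (a^2+2*b)*c0^2*c2 - b*c0*c1^2 - (a*b+3)*c0*c1*c2
      + (b^2-2*a)*c0*c2^2 + c1^3 + a*c1^2*c2 - b*c1*c2^2 + c2^3 with hN_def
  have expand : ((c0:ℂ) + c1*(β:ℂ) + c2*(β:ℂ)^2) * (((c0:ℂ) + c1*α + c2*α^2) * ((c0:ℂ) + c1*w + c2*w^2)) =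
      (c0:ℂ)^3 + ((β:ℂ) + α + w)*c0^2*c1
      + (((β:ℂ) + α + w)^2 - 2*((β:ℂ)*α + (β:ℂ)*w + α*w))*c0^2*c2
      + ((β:ℂ)*α + (β:ℂ)*w + α*w)*c0*c1^2
      + (((β:ℂ) + α + w)*((β:ℂ)*α + (β:ℂ)*w + α*w) - 3*((β:ℂ)*α*w))*c0*c1*c2
      + (((β:ℂ)*α + (β:ℂ)*w + α*w)^2 - 2*((β:ℂ) + α + w)*((β:ℂ)*α*w))*c0*c2^2
      + ((β:ℂ)*α*w)*c1^3 + ((β:ℂ) + α + w)*((β:ℂ)*α*w)*c1^2*c2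
      + ((β:ℂ)*α + (β:ℂ)*w + α*w)*((β:ℂ)*α*w)*c1*c2^2 + ((β:ℂ)*α*w)^2*c2^3 := by
    ring
  rw [hs1, hs2, hs3] at expand
  have hNC : (N:ℂ) = ((c0:ℂ) + c1*(β:ℂ) + c2*(β:ℂ)^2) * (((c0:ℂ) + c1*α + c2*α^2) * ((c0:ℂ) + c1*w + c2*w^2)) := by
    rw [expand, hN_def]; push_cast; ring
  have hconjF : ((c0:ℂ) + c1*w + c2*w^2) = (starRingEnd ℂ) ((c0:ℂ) + c1*α + c2*α^2) := by
    rw [hw_def]; simp [map_add, map_mul, map_pow, map_intCast]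
  set Fv : ℂ := (c0:ℂ) + c1*α + c2*α^2 with hFv_def
  set R : ℝ := (c0:ℝ) + c1*β + c2*β^2 with hR_def
  have hFu : ((c0:ℂ) + c1*(β:ℂ) + c2*(β:ℂ)^2) = ((R:ℝ):ℂ) := by rw [hR_def]; push_cast; ring
  have hNC2 : ((N:ℝ):ℂ) = ((R * Complex.normSq Fv : ℝ):ℂ) := by
    push_cast
    rw [hNC, hconjF, Complex.mul_conj, hFu]
  have hNR : (N:ℝ) = R * Complex.normSq Fv := Complex.ofReal_injective hNC2
  -- positivity of the beta-sum
  have hSβR : ∑ i ∈ Finset.range n, (d i:ℝ)*β^i = R := by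
    have h := hmod (β:ℂ) hu
    have h2 : ((∑ i ∈ Finset.range n, (d i:ℝ)*β^i : ℝ):ℂ) = ((R:ℝ):ℂ) := by
      rw [hR_def]
      push_cast
      push_cast at h
      exact h
    exact_mod_cast h2
  have hSβpos : 0 < ∑ i ∈ Finset.range n, (d i:ℝ)*β^i := by
    obtain ⟨i0, hi0, hd0⟩ := hne
    refine Finset.sum_pos' (fun i _ => by positivity) ⟨i0, Finset.mem_range.mpr hi0, ?_⟩
    have h0 : (0:ℝ) < d i0 := by exact_mod_cast Nat.pos_of_ne_zero hd0
    positivity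
  have hRpos : 0 < R := hSβR ▸ hSβpos
  have hRle : R ≤ β^n := hSβR ▸ hsum
  -- Fv ≠ 0
  have hFvne : Fv ≠ 0 := by
    intro hfv
    have hfv' : (c0:ℂ) + c1*α + c2*α^2 = 0 := by rw [← hFv_def]; exact hfv
    have hfw : (c0:ℂ) + c1*w + c2*w^2 = 0 := by rw [hconjF, hfv, map_zero]
    have hA' : (α - w) * ((c1:ℂ) + c2*(α+w)) = 0 := by linear_combination hfv' - hfw
    have hA : (c1:ℂ) + c2*(α+w) = 0 := (mul_eq_zero.mp hA').resolve_left (sub_ne_zero.mpr hvw)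
    by_cases hc2 : c2 = 0
    · have hc1 : c1 = 0 := by
        have h : (c1:ℂ) = 0 := by rw [hc2] at hA; simpa using hA
        exact_mod_cast h
      have hc0 : c0 = 0 := by
        have h : (c0:ℂ) = 0 := by rw [hc1, hc2] at hfv'; simpa using hfv'
        exact_mod_cast h
      have hR0 : R = 0 := by rw [hR_def, hc0, hc1, hc2]; push_cast; ring
      rw [hR0] at hRpos; exact lt_irrefl 0 hRpos
    · have hvwval : (c2:ℂ) * (α*w) = c0 := by linear_combination -hfv' + α*hA
      have hc2c0 : (c2:ℂ) = (c0:ℂ) * (β:ℂ) := by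
        calc (c2:ℂ) = c2 * ((β:ℂ)*α*w) := by rw [hs3]; ring
          _ = (β:ℂ) * (c2*(α*w)) := by ring
          _ = (c0:ℂ)*(β:ℂ) := by rw [hvwval]; ring
      have hreal : (c2:ℝ) = (c0:ℝ) * β := by exact_mod_cast hc2c0
      have hc0ne : c0 ≠ 0 := by
        intro h
        apply hc2
        have h2 : (c2:ℝ) = 0 := by rw [hreal, h]; simp
        exact_mod_cast h2
      have hc0R : ((c0:ℝ)) ≠ 0 := Int.cast_ne_zero.mpr hc0ne
      set qq : ℚ := (c2:ℚ)/(c0:ℚ) with hqq_def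
      have hqβ : (qq:ℝ) = β := by
        rw [hqq_def]; push_cast; rw [hreal]; field_simp
      have hqe : qq^3 = (a:ℚ)*qq^2 + (b:ℚ)*qq + 1 := by
        have h3 : ((qq:ℝ))^3 = (a:ℝ)*(qq:ℝ)^2 + (b:ℝ)*(qq:ℝ) + 1 := by rw [hqβ]; exact hβroot
        exact_mod_cast h3
      have hden0 : ((qq.den:ℚ)) ≠ 0 := Nat.cast_ne_zero.mpr qq.den_nz
      have hnum : (qq.num:ℚ) = qq * qq.den := by
        exact (div_eq_iff hden0).mp (Rat.num_div_den qq)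
      have hZQ : (qq.num:ℚ)^3 = a*qq.num^2*qq.den + b*qq.num*qq.den^2 + (qq.den:ℚ)^3 := by
        calc (qq.num:ℚ)^3 = (qq*qq.den)^3 := by rw [← hnum]
          _ = qq^3*(qq.den:ℚ)^3 := by ring
          _ = ((a:ℚ)*qq^2 + b*qq + 1)*(qq.den:ℚ)^3 := by rw [hqe]
          _ = a*(qq*qq.den)^2*qq.den + b*(qq*qq.den)*qq.den^2 + (qq.den:ℚ)^3 := by ring
          _ = _ := by rw [← hnum]
      have hZ : qq.num^3 = a*qq.num^2*qq.den + b*qq.num*(qq.den:ℤ)^2 + (qq.den:ℤ)^3 := by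
        exact_mod_cast hZQ
      have hdvd : (qq.den:ℤ) ∣ qq.num^3 :=
        ⟨a*qq.num^2 + b*qq.num*qq.den + (qq.den:ℤ)^2, by linear_combination hZ⟩
      have hdvdN : qq.den ∣ qq.num.natAbs^3 := by
        have h4 := Int.natAbs_dvd_natAbs.mpr hdvd
        simpa [Int.natAbs_pow] using h4
      have hden1 : qq.den = 1 := (Nat.Coprime.pow_right 3 qq.reduced.symm).eq_one_of_dvd hdvdN
      have hm : qq.num^3 = a*qq.num^2 + b*qq.num + 1 := by
        rw [hden1] at hZ; push_cast at hZ; linear_combination hZ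
      have hunit : qq.num * (qq.num^2 - a*qq.num - b) = 1 := by linear_combination hm
      have hqval : (qq.num:ℚ) = qq := by
        rw [hnum, hden1]; push_cast; ring
      have hβnum : β = (qq.num:ℝ) := by
        rw [← hqβ]; exact_mod_cast hqval.symm
      rcases Int.isUnit_iff.mp (IsUnit.of_mul_eq_one _ hunit) with h1 | h1
      · rw [h1] at hβnum; norm_num at hβnum; linarith
      · rw [h1] at hβnum; norm_num at hβnum; linarith
  -- conclude
  have hNpos : 0 < N := by
    have h7 : (0:ℝ) < (N:ℝ) := by
      rw [hNR]; exact mul_pos hRpos (Complex.normSq_pos.mpr hFvne)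
    exact_mod_cast h7
  have hN1 : (1:ℝ) ≤ (N:ℝ) := by exact_mod_cast hNpos
  have hβn : (0:ℝ) < β^n := pow_pos hβpos n
  have h1 : 1/β^n ≤ Complex.normSq Fv := by
    have h1R : 1/β^n ≤ 1/R := one_div_le_one_div_of_le hRpos hRle
    have h2R : 1/R ≤ Complex.normSq Fv := by
      rw [div_le_iff₀ hRpos]
      nlinarith [hN1, hNR]
    linarith
  have hnsα : Complex.normSq α = 1/β := by
    have hcα : ((β * Complex.normSq α : ℝ):ℂ) = ((1:ℝ):ℂ) := by
      push_cast
      rw [← Complex.mul_conj α, ← hw_def, ← hs3]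
      ring
    have h8 : β * Complex.normSq α = 1 := Complex.ofReal_injective hcα
    rw [eq_div_iff hβpos.ne']
    linarith
  have Ev : ∑ i ∈ Finset.range n, (d i : ℂ) * α^i = Fv := by
    rw [hmod α hαroot, hFv_def]
  have hsq : (‖α‖^n)^2 ≤ ‖Fv‖^2 := by
    have e1 : (‖α‖^n)^2 = (Complex.normSq α)^n := by
      rw [← pow_mul, mul_comm n 2, pow_mul, Complex.sq_norm]
    rw [e1, Complex.sq_norm, hnsα]
    calc (1/β)^n = 1/β^n := by rw [div_pow, one_pow]
      _ ≤ _ := h1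
  rw [Ev]
  have h9 := Real.sqrt_le_sqrt hsq
  rwa [Real.sqrt_sq (pow_nonneg (norm_nonneg α) n),
    Real.sqrt_sq (norm_nonneg Fv)] at h9
end
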